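/- arXiv:1901.06885 — 11 statements merged into one kernel-verified Lean document; each statement's English description precedes it below -/
import Mathlib

section
/- Let d ≥ 0 and r ≥ 0 be integers and let μ1, …, μ10 be nonnegative integers satisfying conditions (A)–(D) (the conditions satisfied by the knot multiplicities of a C^r-smooth simplex spline of degree d on the Powell–Sabin 12-split). If d ≤ 2r + 1, then μ7 = μ8 = μ9 = 0. -/
/-- If the knot multiplicities of a `C^r`-smooth simplex spline of degree `d`
on the Powell–Sabin 12-split satisfy conditions (A)–(D) and `d ≤ 2r + 1`,
then `μ7 = μ8 = μ9 = 0`.  (Indices are 0-based: `μ i` corresponds to `μ_{i+1}`.) -/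
theorem knot_multiplicities_m789
    (p : Fin 10 → ℝ × ℝ)
    (hind : AffineIndependent ℝ ![p 0, p 1, p 2])
    (h4 : p 3 = (2⁻¹ : ℝ) • (p 0 + p 1))
    (h5 : p 4 = (2⁻¹ : ℝ) • (p 1 + p 2))
    (h6 : p 5 = (2⁻¹ : ℝ) • (p 2 + p 0))
    (h7 : p 6 = (2⁻¹ : ℝ) • (p 3 + p 5))
    (h8 : p 7 = (2⁻¹ : ℝ) • (p 3 + p 4))
    (h9 : p 8 = (2⁻¹ : ℝ) • (p 4 + p 5))
    (h10 : p 9 = (3⁻¹ : ℝ) • (p 0 + p 1 + p 2))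
    (d r : ℕ) (μ : Fin 10 → ℕ)
    (hA : μ 0 * μ 7 = 0 ∧ μ 0 * μ 8 = 0 ∧ μ 7 * μ 8 = 0 ∧
          μ 1 * μ 6 = 0 ∧ μ 1 * μ 8 = 0 ∧ μ 6 * μ 8 = 0 ∧
          μ 2 * μ 6 = 0 ∧ μ 2 * μ 7 = 0 ∧ μ 6 * μ 7 = 0)
    (hB : ∑ i, μ i = d + 3)
    (hC : ∀ L ∈ ([{0, 4, 6, 9}, {3, 5, 6}, {1, 5, 7, 9}, {3, 4, 7},
        {2, 3, 8, 9}, {4, 5, 8}] : List (Finset (Fin 10))),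
      (∃ i ∈ L, ∃ j ∈ L, i ≠ j ∧ 0 < μ i ∧ 0 < μ j) →
        (∑ i ∈ L, (μ i : ℤ)) ≤ (d : ℤ) + 1 - (r : ℤ))
    (hD : ∃ i j k : Fin 10, 0 < μ i ∧ 0 < μ j ∧ 0 < μ k ∧
        AffineIndependent ℝ ![p i, p j, p k])
    (hd : d ≤ 2 * r + 1) :
    μ 6 = 0 ∧ μ 7 = 0 ∧ μ 8 = 0 := by
  obtain ⟨a07, a08, a78, a16, a18, a68, a26, a27, a67⟩ := hA
  have key : ∀ (s : Set (ℝ × ℝ)), Collinear ℝ s → (∀ i, 0 < μ i → p i ∈ s) → False := by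
    intro s hs hmem
    obtain ⟨i, j, k, hi, hj, hk, haff⟩ := hD
    rw [affineIndependent_iff_not_collinear_set] at haff
    exact haff (hs.subset (by
      intro q hq
      simp only [Set.mem_insert_iff, Set.mem_singleton_iff] at hq
      rcases hq with rfl | rfl | rfl
      exacts [hmem i hi, hmem j hj, hmem k hk]))
  have hsum : μ 0 + μ 1 + μ 2 + μ 3 + μ 4 + μ 5 + μ 6 + μ 7 + μ 8 + μ 9 = d + 3 := by
    rw [Finset.sum_fin_eq_sum_range] at hB
    simp [Finset.sum_range_succ] at hB
    convert hB using 2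
  -- collinearity of the six lines
  have col1 : Collinear ℝ ({p 0, p 4, p 6, p 9} : Set (ℝ × ℝ)) := by
    rw [collinear_iff_exists_forall_eq_smul_vadd]
    refine ⟨p 0, p 4 - p 0, ?_⟩
    intro q hq
    simp only [Set.mem_insert_iff, Set.mem_singleton_iff] at hq
    rcases hq with rfl | rfl | rfl | rfl
    · exact ⟨0, by simp⟩
    · exact ⟨1, by simp [vadd_eq_add]⟩
    · exact ⟨2⁻¹, by rw [h7, h4, h6, h5]; simp only [vadd_eq_add]; module⟩
    · exact ⟨2/3, by rw [h10, h5]; simp only [vadd_eq_add]; module⟩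
  have col2 : Collinear ℝ ({p 3, p 5, p 6} : Set (ℝ × ℝ)) := by
    rw [collinear_iff_exists_forall_eq_smul_vadd]
    refine ⟨p 3, p 5 - p 3, ?_⟩
    intro q hq
    simp only [Set.mem_insert_iff, Set.mem_singleton_iff] at hq
    rcases hq with rfl | rfl | rfl
    · exact ⟨0, by simp⟩
    · exact ⟨1, by simp [vadd_eq_add]⟩
    · exact ⟨2⁻¹, by rw [h7]; simp only [vadd_eq_add]; module⟩
  have col3 : Collinear ℝ ({p 1, p 5, p 7, p 9} : Set (ℝ × ℝ)) := by
    rw [collinear_iff_exists_forall_eq_smul_vadd]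
    refine ⟨p 1, p 5 - p 1, ?_⟩
    intro q hq
    simp only [Set.mem_insert_iff, Set.mem_singleton_iff] at hq
    rcases hq with rfl | rfl | rfl | rfl
    · exact ⟨0, by simp⟩
    · exact ⟨1, by simp [vadd_eq_add]⟩
    · exact ⟨2⁻¹, by rw [h8, h4, h5, h6]; simp only [vadd_eq_add]; module⟩
    · exact ⟨2/3, by rw [h10, h6]; simp only [vadd_eq_add]; module⟩
  have col4 : Collinear ℝ ({p 3, p 4, p 7} : Set (ℝ × ℝ)) := by
    rw [collinear_iff_exists_forall_eq_smul_vadd]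
    refine ⟨p 3, p 4 - p 3, ?_⟩
    intro q hq
    simp only [Set.mem_insert_iff, Set.mem_singleton_iff] at hq
    rcases hq with rfl | rfl | rfl
    · exact ⟨0, by simp⟩
    · exact ⟨1, by simp [vadd_eq_add]⟩
    · exact ⟨2⁻¹, by rw [h8]; simp only [vadd_eq_add]; module⟩
  have col5 : Collinear ℝ ({p 2, p 3, p 8, p 9} : Set (ℝ × ℝ)) := by
    rw [collinear_iff_exists_forall_eq_smul_vadd]
    refine ⟨p 2, p 3 - p 2, ?_⟩
    intro q hq
    simp only [Set.mem_insert_iff, Set.mem_singleton_iff] at hq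
    rcases hq with rfl | rfl | rfl | rfl
    · exact ⟨0, by simp⟩
    · exact ⟨1, by simp [vadd_eq_add]⟩
    · exact ⟨2⁻¹, by rw [h9, h5, h6, h4]; simp only [vadd_eq_add]; module⟩
    · exact ⟨2/3, by rw [h10, h4]; simp only [vadd_eq_add]; module⟩
  have col6 : Collinear ℝ ({p 4, p 5, p 8} : Set (ℝ × ℝ)) := by
    rw [collinear_iff_exists_forall_eq_smul_vadd]
    refine ⟨p 4, p 5 - p 4, ?_⟩
    intro q hq
    simp only [Set.mem_insert_iff, Set.mem_singleton_iff] at hq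
    rcases hq with rfl | rfl | rfl
    · exact ⟨0, by simp⟩
    · exact ⟨1, by simp [vadd_eq_add]⟩
    · exact ⟨2⁻¹, by rw [h9]; simp only [vadd_eq_add]; module⟩
  -- sums over the six lines
  -- μ 6 = 0
  have hz6 : μ 6 = 0 := by
    by_contra h
    have h6p : 0 < μ 6 := Nat.pos_of_ne_zero h
    have hb1 : μ 1 = 0 := by rcases Nat.mul_eq_zero.mp a16 with h' | h' <;> omega
    have hb2 : μ 2 = 0 := by rcases Nat.mul_eq_zero.mp a26 with h' | h' <;> omega
    have hb7 : μ 7 = 0 := by rcases Nat.mul_eq_zero.mp a67 with h' | h' <;> omega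
    have hb8 : μ 8 = 0 := by rcases Nat.mul_eq_zero.mp a68 with h' | h' <;> omega
    have e1 : (∑ i ∈ ({0, 4, 6, 9} : Finset (Fin 10)), (μ i : ℤ)) ≤ (d : ℤ) + 1 - r := by
      apply hC _ (by simp)
      by_cases h0 : 0 < μ 0
      · exact ⟨0, by decide, 6, by decide, by decide, h0, h6p⟩
      by_cases hh4 : 0 < μ 4
      · exact ⟨4, by decide, 6, by decide, by decide, hh4, h6p⟩
      by_cases hh9 : 0 < μ 9
      · exact ⟨9, by decide, 6, by decide, by decide, hh9, h6p⟩
      exfalso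
      apply key _ col2
      intro i hi
      clear * - hi hb1 hb2 hb7 hb8 h0 hh4 hh9
      fin_cases i <;> simp_all
    have e2 : (∑ i ∈ ({3, 5, 6} : Finset (Fin 10)), (μ i : ℤ)) ≤ (d : ℤ) + 1 - r := by
      apply hC _ (by simp)
      by_cases hh3 : 0 < μ 3
      · exact ⟨3, by decide, 6, by decide, by decide, hh3, h6p⟩
      by_cases hh5 : 0 < μ 5
      · exact ⟨5, by decide, 6, by decide, by decide, hh5, h6p⟩
      exfalso
      apply key _ col1
      intro i hi
      clear * - hi hb1 hb2 hb7 hb8 hh3 hh5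
      fin_cases i <;> simp_all
    rw [show (∑ i ∈ ({0, 4, 6, 9} : Finset (Fin 10)), (μ i : ℤ))
        = (μ 0 : ℤ) + μ 4 + μ 6 + μ 9 by simp [Finset.sum_insert, Finset.mem_insert]; ring] at e1
    rw [show (∑ i ∈ ({3, 5, 6} : Finset (Fin 10)), (μ i : ℤ))
        = (μ 3 : ℤ) + μ 5 + μ 6 by simp [Finset.sum_insert, Finset.mem_insert]; ring] at e2
    omega
  have hz7 : μ 7 = 0 := by
    by_contra h
    have h7p : 0 < μ 7 := Nat.pos_of_ne_zero h
    have hb0 : μ 0 = 0 := by rcases Nat.mul_eq_zero.mp a07 with h' | h' <;> omega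
    have hb2 : μ 2 = 0 := by rcases Nat.mul_eq_zero.mp a27 with h' | h' <;> omega
    have hb8 : μ 8 = 0 := by rcases Nat.mul_eq_zero.mp a78 with h' | h' <;> omega
    have e1 : (∑ i ∈ ({1, 5, 7, 9} : Finset (Fin 10)), (μ i : ℤ)) ≤ (d : ℤ) + 1 - r := by
      apply hC _ (by simp)
      by_cases h1 : 0 < μ 1
      · exact ⟨1, by decide, 7, by decide, by decide, h1, h7p⟩
      by_cases hh5 : 0 < μ 5
      · exact ⟨5, by decide, 7, by decide, by decide, hh5, h7p⟩
      by_cases hh9 : 0 < μ 9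
      · exact ⟨9, by decide, 7, by decide, by decide, hh9, h7p⟩
      exfalso
      apply key _ col4
      intro i hi
      clear * - hi hz6 hb0 hb2 hb8 h1 hh5 hh9
      fin_cases i <;> simp_all
    have e2 : (∑ i ∈ ({3, 4, 7} : Finset (Fin 10)), (μ i : ℤ)) ≤ (d : ℤ) + 1 - r := by
      apply hC _ (by simp)
      by_cases hh3 : 0 < μ 3
      · exact ⟨3, by decide, 7, by decide, by decide, hh3, h7p⟩
      by_cases hh4 : 0 < μ 4
      · exact ⟨4, by decide, 7, by decide, by decide, hh4, h7p⟩
      exfalso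
      apply key _ col3
      intro i hi
      clear * - hi hz6 hb0 hb2 hb8 hh3 hh4
      fin_cases i <;> simp_all
    rw [show (∑ i ∈ ({1, 5, 7, 9} : Finset (Fin 10)), (μ i : ℤ))
        = (μ 1 : ℤ) + μ 5 + μ 7 + μ 9 by simp [Finset.sum_insert, Finset.mem_insert]; ring] at e1
    rw [show (∑ i ∈ ({3, 4, 7} : Finset (Fin 10)), (μ i : ℤ))
        = (μ 3 : ℤ) + μ 4 + μ 7 by simp [Finset.sum_insert, Finset.mem_insert]; ring] at e2
    omega
  have hz8 : μ 8 = 0 := by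
    by_contra h
    have h8p : 0 < μ 8 := Nat.pos_of_ne_zero h
    have hb0 : μ 0 = 0 := by rcases Nat.mul_eq_zero.mp a08 with h' | h' <;> omega
    have hb1 : μ 1 = 0 := by rcases Nat.mul_eq_zero.mp a18 with h' | h' <;> omega
    have e1 : (∑ i ∈ ({2, 3, 8, 9} : Finset (Fin 10)), (μ i : ℤ)) ≤ (d : ℤ) + 1 - r := by
      apply hC _ (by simp)
      by_cases h2 : 0 < μ 2
      · exact ⟨2, by decide, 8, by decide, by decide, h2, h8p⟩
      by_cases hh3 : 0 < μ 3
      · exact ⟨3, by decide, 8, by decide, by decide, hh3, h8p⟩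
      by_cases hh9 : 0 < μ 9
      · exact ⟨9, by decide, 8, by decide, by decide, hh9, h8p⟩
      exfalso
      apply key _ col6
      intro i hi
      clear * - hi hz6 hz7 hb0 hb1 h2 hh3 hh9
      fin_cases i <;> simp_all
    have e2 : (∑ i ∈ ({4, 5, 8} : Finset (Fin 10)), (μ i : ℤ)) ≤ (d : ℤ) + 1 - r := by
      apply hC _ (by simp)
      by_cases hh4 : 0 < μ 4
      · exact ⟨4, by decide, 8, by decide, by decide, hh4, h8p⟩
      by_cases hh5 : 0 < μ 5
      · exact ⟨5, by decide, 8, by decide, by decide, hh5, h8p⟩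
      exfalso
      apply key _ col5
      intro i hi
      clear * - hi hz6 hz7 hb0 hb1 hh4 hh5
      fin_cases i <;> simp_all
    rw [show (∑ i ∈ ({2, 3, 8, 9} : Finset (Fin 10)), (μ i : ℤ))
        = (μ 2 : ℤ) + μ 3 + μ 8 + μ 9 by simp [Finset.sum_insert, Finset.mem_insert]; ring] at e1
    rw [show (∑ i ∈ ({4, 5, 8} : Finset (Fin 10)), (μ i : ℤ))
        = (μ 4 : ℤ) + μ 5 + μ 8 by simp [Finset.sum_insert, Finset.mem_insert]; ring] at e2
    omega
  exact ⟨hz6, hz7, hz8⟩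
end

section
/- Let d ≥ 0 and r ≥ 0 be integers and let μ1, …, μ10 be nonnegative integers satisfying conditions (A)–(D) (the conditions satisfied by the knot multiplicities of a C^r-smooth simplex spline of degree d on the Powell–Sabin 12-split). If d ≤ ⌈3r/2⌉ (the ceiling of 3r/2), then μ10 = 0. -/
set_option maxHeartbeats 1000000

/-- under conditions (A)–(D), if `d ≤ ⌈3r/2⌉` then `μ10 = 0`.
(Indices are 0-based: `μ i` corresponds to `μ_{i+1}`; `⌈3r/2⌉ = (3r+1)/2` in ℕ.) -/
theorem knot_multiplicities_m10
    (p : Fin 10 → ℝ × ℝ)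
    (hind : AffineIndependent ℝ ![p 0, p 1, p 2])
    (h4 : p 3 = (2⁻¹ : ℝ) • (p 0 + p 1))
    (h5 : p 4 = (2⁻¹ : ℝ) • (p 1 + p 2))
    (h6 : p 5 = (2⁻¹ : ℝ) • (p 2 + p 0))
    (h7 : p 6 = (2⁻¹ : ℝ) • (p 3 + p 5))
    (h8 : p 7 = (2⁻¹ : ℝ) • (p 3 + p 4))
    (h9 : p 8 = (2⁻¹ : ℝ) • (p 4 + p 5))
    (h10 : p 9 = (3⁻¹ : ℝ) • (p 0 + p 1 + p 2))
    (d r : ℕ) (μ : Fin 10 → ℕ)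
    (hA : μ 0 * μ 7 = 0 ∧ μ 0 * μ 8 = 0 ∧ μ 7 * μ 8 = 0 ∧
          μ 1 * μ 6 = 0 ∧ μ 1 * μ 8 = 0 ∧ μ 6 * μ 8 = 0 ∧
          μ 2 * μ 6 = 0 ∧ μ 2 * μ 7 = 0 ∧ μ 6 * μ 7 = 0)
    (hB : ∑ i, μ i = d + 3)
    (hC : ∀ L ∈ ([{0, 4, 6, 9}, {3, 5, 6}, {1, 5, 7, 9}, {3, 4, 7},
        {2, 3, 8, 9}, {4, 5, 8}] : List (Finset (Fin 10))),
      (∃ i ∈ L, ∃ j ∈ L, i ≠ j ∧ 0 < μ i ∧ 0 < μ j) →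
        (∑ i ∈ L, (μ i : ℤ)) ≤ (d : ℤ) + 1 - (r : ℤ))
    (hD : ∃ i j k : Fin 10, 0 < μ i ∧ 0 < μ j ∧ 0 < μ k ∧
        AffineIndependent ℝ ![p i, p j, p k])
    (hd : d ≤ (3 * r + 1) / 2) :
    μ 9 = 0 := by
  by_contra h9n
  have hpos : 0 < μ 9 := Nat.pos_of_ne_zero h9n
  -- the three lines through p 9
  have col_A : Collinear ℝ ({p 0, p 4, p 6, p 9} : Set (ℝ × ℝ)) := by
    rw [collinear_iff_of_mem (Set.mem_insert _ _)]
    refine ⟨p 1 + p 2 - 2 • p 0, ?_⟩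
    rintro q (rfl | rfl | rfl | rfl)
    · exact ⟨0, by rw [vadd_eq_add]; module⟩
    · exact ⟨1/2, by rw [vadd_eq_add, h5]; module⟩
    · exact ⟨1/4, by rw [vadd_eq_add, h7, h4, h6]; module⟩
    · exact ⟨1/3, by rw [vadd_eq_add, h10]; module⟩
  have col_C : Collinear ℝ ({p 1, p 5, p 7, p 9} : Set (ℝ × ℝ)) := by
    rw [collinear_iff_of_mem (Set.mem_insert _ _)]
    refine ⟨p 0 + p 2 - 2 • p 1, ?_⟩
    rintro q (rfl | rfl | rfl | rfl)
    · exact ⟨0, by rw [vadd_eq_add]; module⟩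
    · exact ⟨1/2, by rw [vadd_eq_add, h6]; module⟩
    · exact ⟨1/4, by rw [vadd_eq_add, h8, h4, h5]; module⟩
    · exact ⟨1/3, by rw [vadd_eq_add, h10]; module⟩
  have col_E : Collinear ℝ ({p 2, p 3, p 8, p 9} : Set (ℝ × ℝ)) := by
    rw [collinear_iff_of_mem (Set.mem_insert _ _)]
    refine ⟨p 0 + p 1 - 2 • p 2, ?_⟩
    rintro q (rfl | rfl | rfl | rfl)
    · exact ⟨0, by rw [vadd_eq_add]; module⟩
    · exact ⟨1/2, by rw [vadd_eq_add, h4]; module⟩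
    · exact ⟨1/4, by rw [vadd_eq_add, h9, h5, h6]; module⟩
    · exact ⟨1/3, by rw [vadd_eq_add, h10]; module⟩
  obtain ⟨i, j, k, hi, hj, hk, hijk⟩ := hD
  have hB' : μ 0 + μ 1 + μ 2 + μ 3 + μ 4 + μ 5 + μ 6 + μ 7 + μ 8 + μ 9 = d + 3 := by
    rw [← hB, show (Finset.univ : Finset (Fin 10)) = {0,1,2,3,4,5,6,7,8,9} from by decide]
    simp [Finset.sum_insert, Finset.mem_insert]
    omega
  clear hB
  -- extracted inequalities from hC
  have hCa : (0 < μ 0 ∨ 0 < μ 4 ∨ 0 < μ 6) →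
      (μ 0 : ℤ) + μ 4 + μ 6 + μ 9 ≤ (d : ℤ) + 1 - r := by
    intro h
    have hs : ∑ i ∈ ({0,4,6,9} : Finset (Fin 10)), (μ i : ℤ)
        = (μ 0 : ℤ) + μ 4 + μ 6 + μ 9 := by
      simp [Finset.sum_insert, Finset.mem_insert]; ring
    rw [← hs]
    refine hC _ (by simp) ?_
    rcases h with h | h | h
    · exact ⟨0, by decide, 9, by decide, by decide, h, hpos⟩
    · exact ⟨4, by decide, 9, by decide, by decide, h, hpos⟩
    · exact ⟨6, by decide, 9, by decide, by decide, h, hpos⟩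
  have hCc : (0 < μ 1 ∨ 0 < μ 5 ∨ 0 < μ 7) →
      (μ 1 : ℤ) + μ 5 + μ 7 + μ 9 ≤ (d : ℤ) + 1 - r := by
    intro h
    have hs : ∑ i ∈ ({1,5,7,9} : Finset (Fin 10)), (μ i : ℤ)
        = (μ 1 : ℤ) + μ 5 + μ 7 + μ 9 := by
      simp [Finset.sum_insert, Finset.mem_insert]; ring
    rw [← hs]
    refine hC _ (by simp) ?_
    rcases h with h | h | h
    · exact ⟨1, by decide, 9, by decide, by decide, h, hpos⟩
    · exact ⟨5, by decide, 9, by decide, by decide, h, hpos⟩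
    · exact ⟨7, by decide, 9, by decide, by decide, h, hpos⟩
  have hCe : (0 < μ 2 ∨ 0 < μ 3 ∨ 0 < μ 8) →
      (μ 2 : ℤ) + μ 3 + μ 8 + μ 9 ≤ (d : ℤ) + 1 - r := by
    intro h
    have hs : ∑ i ∈ ({2,3,8,9} : Finset (Fin 10)), (μ i : ℤ)
        = (μ 2 : ℤ) + μ 3 + μ 8 + μ 9 := by
      simp [Finset.sum_insert, Finset.mem_insert]; ring
    rw [← hs]
    refine hC _ (by simp) ?_
    rcases h with h | h | h
    · exact ⟨2, by decide, 9, by decide, by decide, h, hpos⟩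
    · exact ⟨3, by decide, 9, by decide, by decide, h, hpos⟩
    · exact ⟨8, by decide, 9, by decide, by decide, h, hpos⟩
  by_cases ha : μ 0 = 0 ∧ μ 4 = 0 ∧ μ 6 = 0 <;>
    by_cases hc : μ 1 = 0 ∧ μ 5 = 0 ∧ μ 7 = 0 <;>
    by_cases he : μ 2 = 0 ∧ μ 3 = 0 ∧ μ 8 = 0
  · have mem : ∀ t : Fin 10, 0 < μ t → p t ∈ ({p 2, p 3, p 8, p 9} : Set (ℝ × ℝ)) := by
      intro t ht
      clear hC hijk hind col_A col_C col_E h4 h5 h6 h7 h8 h9 h10 hB' hCa hCc hCe hA hd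
      fin_cases t <;> simp_all
    exact affineIndependent_iff_not_collinear_set.mp hijk
      (col_E.subset (by
        rintro x (rfl | rfl | rfl)
        exacts [mem i hi, mem j hj, mem k hk]))
  · have mem : ∀ t : Fin 10, 0 < μ t → p t ∈ ({p 2, p 3, p 8, p 9} : Set (ℝ × ℝ)) := by
      intro t ht
      clear hC hijk hind col_A col_C col_E h4 h5 h6 h7 h8 h9 h10 hB' hCa hCc hCe hA hd
      fin_cases t <;> simp_all
    exact affineIndependent_iff_not_collinear_set.mp hijk
      (col_E.subset (by
        rintro x (rfl | rfl | rfl)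
        exacts [mem i hi, mem j hj, mem k hk]))
  · have mem : ∀ t : Fin 10, 0 < μ t → p t ∈ ({p 1, p 5, p 7, p 9} : Set (ℝ × ℝ)) := by
      intro t ht
      clear hC hijk hind col_A col_C col_E h4 h5 h6 h7 h8 h9 h10 hB' hCa hCc hCe hA hd
      fin_cases t <;> simp_all
    exact affineIndependent_iff_not_collinear_set.mp hijk
      (col_C.subset (by
        rintro x (rfl | rfl | rfl)
        exacts [mem i hi, mem j hj, mem k hk]))
  · have i1 := hCc (by omega)
    have i2 := hCe (by omega)
    omega
  · have mem : ∀ t : Fin 10, 0 < μ t → p t ∈ ({p 0, p 4, p 6, p 9} : Set (ℝ × ℝ)) := by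
      intro t ht
      clear hC hijk hind col_A col_C col_E h4 h5 h6 h7 h8 h9 h10 hB' hCa hCc hCe hA hd
      fin_cases t <;> simp_all
    exact affineIndependent_iff_not_collinear_set.mp hijk
      (col_A.subset (by
        rintro x (rfl | rfl | rfl)
        exacts [mem i hi, mem j hj, mem k hk]))
  · have i1 := hCa (by omega)
    have i2 := hCe (by omega)
    omega
  · have i1 := hCa (by omega)
    have i2 := hCc (by omega)
    omega
  · have i1 := hCa (by omega)
    have i2 := hCc (by omega)
    have i3 := hCe (by omega)
    omega
end

section
/- Let m1, m2 ≥ 0 with m = m1 + m2 ≥ 1, let U ⊆ ℝ² be open, and let f : U → ℝ be of class C^m. Let x ∈ U have barycentric coordinates β = (β1, β2, β3) with respect to p1, p2, p3, and let α₁, α₂ ∈ ℝ³ be the directional coordinates of the standard basis vectors e1 = (1,0) and e2 = (0,1) of ℝ². Then the mixed partial derivative ∂^m f / (∂x1^{m1} ∂x2^{m2}) at x equals the sum, over all multi-indices i₁ ∈ ℕ³ with |i₁| = m1 and i₂ ∈ ℕ³ with |i₂| = m2, of (m1 choose i₁)·(m2 choose i₂)·α₁^{i₁}·α₂^{i₂}·(∂^m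 g / ∂b^{i₁+i₂})(β), where (m choose i) is the multinomial coefficient, α^i denotes the multi-index power, and g = f ∘ L. -/
/-- The directional-derivative operator `D_v`. -/
noncomputable def dirDeriv {E : Type*} [NormedAddCommGroup E] [NormedSpace ℝ E]
    (v : E) (f : E → ℝ) : E → ℝ :=
  fun z => fderiv ℝ f z v

notation "e₃" j => (Pi.single j 1 : Fin 3 → ℕ)

section Helpers

set_option linter.unusedVariables false

variable {E F : Type*} [NormedAddCommGroup E] [NormedSpace ℝ E]
  [NormedAddCommGroup F] [NormedSpace ℝ F] {U : Set E}

lemma dirDeriv_congr {f g : E → ℝ} (v : E) (hU : IsOpen U) (h : Set.EqOn f g U)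
    {x : E} (hx : x ∈ U) : dirDeriv v f x = dirDeriv v g x := by
  unfold dirDeriv
  rw [Filter.EventuallyEq.fderiv_eq (Filter.eventuallyEq_of_mem (hU.mem_nhds hx) h)]

lemma iter_congr {f g : E → ℝ} (v : E) (hU : IsOpen U) (h : Set.EqOn f g U) (k : ℕ) :
    Set.EqOn ((dirDeriv v)^[k] f) ((dirDeriv v)^[k] g) U := by
  induction k with
  | zero => exact h
  | succ k ih =>
    intro x hx
    rw [Function.iterate_succ_apply', Function.iterate_succ_apply']
    exact dirDeriv_congr v hU ih hx

lemma contDiffOn_dirDeriv (hU : IsOpen U) {f : E → ℝ} {n : ℕ}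
    (hf : ContDiffOn ℝ (n + 1 : ℕ) f U) (v : E) :
    ContDiffOn ℝ (n : ℕ) (dirDeriv v f) U := by
  have h1 : ContDiffOn ℝ (n : ℕ) (fderivWithin ℝ f U) U :=
    hf.fderivWithin hU.uniqueDiffOn (by exact_mod_cast le_refl (n+1))
  have h2 := (ContinuousLinearMap.apply ℝ ℝ v).contDiff.comp_contDiffOn h1
  exact h2.congr fun z hz => by
    simp only [dirDeriv, Function.comp, ContinuousLinearMap.apply_apply]
    rw [fderivWithin_of_isOpen hU hz]

lemma contDiffOn_dirDeriv_iter (hU : IsOpen U) (v : E) (k : ℕ) {f : E → ℝ} {n : ℕ}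
    (hf : ContDiffOn ℝ (n + k : ℕ) f U) :
    ContDiffOn ℝ (n : ℕ) ((dirDeriv v)^[k] f) U := by
  induction k generalizing f with
  | zero => simpa using hf
  | succ k ih =>
    rw [Function.iterate_succ_apply]
    have hf' : ContDiffOn ℝ ((n + k) + 1 : ℕ) f U := by
      have : (n + k) + 1 = n + (k + 1) := by omega
      rwa [this]
    exact ih (contDiffOn_dirDeriv hU hf' v)

lemma diffAt_of_contDiffOn (hU : IsOpen U) {f : E → ℝ} {n : ℕ} (hn : 1 ≤ n)
    (hf : ContDiffOn ℝ (n : ℕ) f U) {x : E} (hx : x ∈ U) : DifferentiableAt ℝ f x :=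
  (hf.differentiableOn (by exact_mod_cast (show n ≠ 0 by omega))).differentiableAt (hU.mem_nhds hx)

lemma dirDeriv_sum {ι : Type*} (s : Finset ι) (c : ι → ℝ) (h : ι → E → ℝ) (v : E) {x : E}
    (hd : ∀ i ∈ s, DifferentiableAt ℝ (h i) x) :
    dirDeriv v (fun z => ∑ i ∈ s, c i * h i z) x = ∑ i ∈ s, c i * dirDeriv v (h i) x := by
  unfold dirDeriv
  have : fderiv ℝ (fun z => ∑ i ∈ s, c i * h i z) x = ∑ i ∈ s, c i • fderiv ℝ (h i) x := by
    rw [fderiv_fun_sum (fun i hi => (hd i hi).const_mul (c i))]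
    exact Finset.sum_congr rfl fun i hi => fderiv_const_mul (hd i hi) (c i)
  rw [this]
  simp

lemma dirDeriv_dir_sum {ι : Type*} [Fintype ι] (w : ι → E) (c : ι → ℝ) (f : E → ℝ) (x : E) :
    dirDeriv (∑ j, c j • w j) f x = ∑ j, c j * dirDeriv (w j) f x := by
  unfold dirDeriv
  rw [map_sum]
  simp

lemma dirDeriv_comm (hU : IsOpen U) {f : E → ℝ} (hf : ContDiffOn ℝ (2 : ℕ) f U) (u v : E)
    {x : E} (hx : x ∈ U) :
    dirDeriv u (dirDeriv v f) x = dirDeriv v (dirDeriv u f) x := by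
  have hca : ContDiffAt ℝ (2 : ℕ) f x := hf.contDiffAt (hU.mem_nhds hx)
  have hsym : IsSymmSndFDerivAt ℝ f x := hca.isSymmSndFDerivAt (by rw [minSmoothness_of_isRCLikeNormedField]; exact le_rfl)
  have hder : DifferentiableAt ℝ (fderiv ℝ f) x := by
    have h1 : ContDiffAt ℝ (1 : ℕ) (fderiv ℝ f) x := hca.fderiv_right (by exact_mod_cast le_refl 2)
    exact h1.differentiableAt (by simp)
  have h1 : ∀ u v : E, dirDeriv u (dirDeriv v f) x = fderiv ℝ (fderiv ℝ f) x u v := by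
    intro u v
    show fderiv ℝ (fun z => fderiv ℝ f z v) x u = _
    rw [fderiv_clm_apply hder (differentiableAt_const v)]
    simp
  rw [h1, h1]
  exact hsym u v

lemma cdo_mono {f : E → ℝ} {a b : ℕ} (h : ContDiffOn ℝ (b : ℕ) f U) (hab : a ≤ b) :
    ContDiffOn ℝ (a : ℕ) f U := h.of_le (by exact_mod_cast hab)

lemma dirDeriv_comm_iter (hU : IsOpen U) (u v : E) (k : ℕ) {f : E → ℝ}
    (hf : ContDiffOn ℝ (k + 1 : ℕ) f U) :
    Set.EqOn (dirDeriv u ((dirDeriv v)^[k] f)) ((dirDeriv v)^[k] (dirDeriv u f)) U := by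
  induction k generalizing f with
  | zero => intro x hx; rfl
  | succ k ih =>
    intro x hx
    rw [Function.iterate_succ_apply]
    have h2 : ContDiffOn ℝ (k + 1 : ℕ) (dirDeriv v f) U := contDiffOn_dirDeriv hU hf v
    rw [ih h2 hx]
    have e : Set.EqOn (dirDeriv u (dirDeriv v f)) (dirDeriv v (dirDeriv u f)) U :=
      fun y hy => dirDeriv_comm hU (cdo_mono hf (by omega)) u v hy
    rw [iter_congr v hU e k hx, Function.iterate_succ_apply]

lemma dirDeriv_iter_comm (hU : IsOpen U) (u v : E) (j k : ℕ) {f : E → ℝ}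
    (hf : ContDiffOn ℝ (j + k : ℕ) f U) :
    Set.EqOn ((dirDeriv u)^[j] ((dirDeriv v)^[k] f)) ((dirDeriv v)^[k] ((dirDeriv u)^[j] f)) U := by
  induction j generalizing f with
  | zero => intro x hx; rfl
  | succ j ih =>
    intro x hx
    rw [Function.iterate_succ_apply]
    have e1 : Set.EqOn (dirDeriv u ((dirDeriv v)^[k] f)) ((dirDeriv v)^[k] (dirDeriv u f)) U :=
      dirDeriv_comm_iter hU u v k (cdo_mono hf (by omega))
    rw [iter_congr u hU e1 j hx]
    have hf' : ContDiffOn ℝ ((j + k) + 1 : ℕ) f U := by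
      have : (j + k) + 1 = (j + 1) + k := by omega
      rwa [this]
    have h2 : ContDiffOn ℝ (j + k : ℕ) (dirDeriv u f) U := contDiffOn_dirDeriv hU hf' u
    rw [ih h2 hx, ← Function.iterate_succ_apply]

lemma iter_sum (hU : IsOpen U) (v : E) (k : ℕ) {ι : Type*} (s : Finset ι) (c : ι → ℝ)
    (h : ι → E → ℝ) (hh : ∀ a ∈ s, ContDiffOn ℝ (k : ℕ) (h a) U) :
    Set.EqOn ((dirDeriv v)^[k] (fun z => ∑ a ∈ s, c a * h a z))
      (fun z => ∑ a ∈ s, c a * (dirDeriv v)^[k] (h a) z) U := by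
  induction k generalizing h with
  | zero => intro x hx; simp
  | succ k ih =>
    intro x hx
    rw [Function.iterate_succ_apply]
    have e1 : Set.EqOn (dirDeriv v (fun z => ∑ a ∈ s, c a * h a z))
        (fun z => ∑ a ∈ s, c a * dirDeriv v (h a) z) U := fun y hy =>
      dirDeriv_sum s c h v (fun a ha => diffAt_of_contDiffOn hU (by omega) (hh a ha) hy)
    rw [iter_congr v hU e1 k hx]
    exact ih (fun a => dirDeriv v (h a)) (fun a ha => contDiffOn_dirDeriv hU (hh a ha) v) hx

lemma dirDeriv_comp_clm (L : F →L[ℝ] E) {f : E → ℝ} {x : F}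
    (hf : DifferentiableAt ℝ f (L x)) (u : F) :
    dirDeriv u (f ∘ L) x = dirDeriv (L u) f (L x) := by
  unfold dirDeriv
  rw [fderiv_comp x hf L.differentiableAt, L.fderiv]
  rfl

lemma dirDeriv_iter_comp (hU : IsOpen U) (L : F →L[ℝ] E) (u : F) (k : ℕ) {f : E → ℝ}
    (hf : ContDiffOn ℝ (k : ℕ) f U) {x : F} (hx : L x ∈ U) :
    (dirDeriv u)^[k] (f ∘ L) x = (dirDeriv (L u))^[k] f (L x) := by
  induction k generalizing f with
  | zero => rfl
  | succ k ih =>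
    rw [Function.iterate_succ_apply, Function.iterate_succ_apply]
    have e1 : Set.EqOn (dirDeriv u (f ∘ L)) ((dirDeriv (L u) f) ∘ L) (L ⁻¹' U) := fun y hy =>
      dirDeriv_comp_clm L (diffAt_of_contDiffOn hU (by omega) hf hy) u
    rw [iter_congr u (hU.preimage L.continuous) e1 k hx]
    exact ih (contDiffOn_dirDeriv hU hf (L u))


end Helpers

section Comb



lemma prod_factorial_single (i : Fin 3 → ℕ) (j : Fin 3) :
    ∏ k, ((i + (e₃ j)) k).factorial = (i j + 1) * ∏ k, (i k).factorial := by
  rw [← Finset.mul_prod_erase Finset.univ (fun k => ((i + (e₃ j)) k).factorial)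
      (Finset.mem_univ j),
    ← Finset.mul_prod_erase Finset.univ (fun k => (i k).factorial) (Finset.mem_univ j)]
  have h1 : (i + (e₃ j)) j = i j + 1 := by simp
  have h2 : ∀ k ∈ Finset.univ.erase j, ((i + (e₃ j)) k).factorial = (i k).factorial := by
    intro k hk
    have hkj : k ≠ j := Finset.ne_of_mem_erase hk
    simp [Pi.single_eq_of_ne hkj]
  rw [Finset.prod_congr rfl h2, h1, Nat.factorial_succ, mul_assoc]

lemma pascal (i : Fin 3 → ℕ) (j : Fin 3) :
    (i j + 1) * Nat.multinomial Finset.univ (i + (e₃ j))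
      = ((∑ k, i k) + 1) * Nat.multinomial Finset.univ i := by
  have hP : 0 < ∏ k, (i k).factorial := Finset.prod_pos fun k _ => Nat.factorial_pos _
  apply Nat.eq_of_mul_eq_mul_left hP
  calc (∏ k, (i k).factorial) * ((i j + 1) * Nat.multinomial Finset.univ (i + (e₃ j)))
      = (∏ k, ((i + (e₃ j)) k).factorial) * Nat.multinomial Finset.univ (i + (e₃ j)) := by
        rw [prod_factorial_single]; ring
    _ = (∑ k, (i + (e₃ j)) k).factorial := Nat.multinomial_spec _ _
    _ = ((∑ k, i k) + 1).factorial := by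
        congr 1
        simp only [Pi.add_apply]
        rw [Finset.sum_add_distrib]
        simp
    _ = ((∑ k, i k) + 1) * (∑ k, i k).factorial := rfl
    _ = ((∑ k, i k) + 1) * ((∏ k, (i k).factorial) * Nat.multinomial Finset.univ i) := by
        rw [Nat.multinomial_spec]
    _ = (∏ k, (i k).factorial) * (((∑ k, i k) + 1) * Nat.multinomial Finset.univ i) := by ring

lemma pow_prod_single (c : Fin 3 → ℝ) (i : Fin 3 → ℕ) (j : Fin 3) :
    ∏ k, c k ^ (i + (e₃ j)) k = c j * ∏ k, c k ^ i k := by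
  rw [← Finset.mul_prod_erase Finset.univ (fun k => c k ^ (i + (e₃ j)) k)
      (Finset.mem_univ j),
    ← Finset.mul_prod_erase Finset.univ (fun k => c k ^ i k) (Finset.mem_univ j)]
  have h2 : ∀ k ∈ Finset.univ.erase j, c k ^ (i + (e₃ j)) k = c k ^ i k := by
    intro k hk
    have hkj : k ≠ j := Finset.ne_of_mem_erase hk
    simp [Pi.single_eq_of_ne hkj]
  have h1 : (i + (e₃ j)) j = i j + 1 := by simp
  rw [Finset.prod_congr rfl h2, h1, pow_succ]
  ring

lemma comb (n : ℕ) (c : Fin 3 → ℝ) (T : (Fin 3 → ℕ) → ℝ) :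
    ∑ i ∈ Finset.Nat.antidiagonalTuple 3 n, ∑ j : Fin 3,
        (Nat.multinomial Finset.univ i : ℝ) * (∏ k, c k ^ i k) * c j * T (i + (e₃ j))
      = ∑ I ∈ Finset.Nat.antidiagonalTuple 3 (n + 1),
        (Nat.multinomial Finset.univ I : ℝ) * (∏ k, c k ^ I k) * T I := by
  have hrhs : ∀ I ∈ Finset.Nat.antidiagonalTuple 3 (n + 1),
      (Nat.multinomial Finset.univ I : ℝ) * (∏ k, c k ^ I k) * T I
        = ∑ j : Fin 3, ((I j : ℝ) / (n + 1)) *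
            ((Nat.multinomial Finset.univ I : ℝ) * (∏ k, c k ^ I k) * T I) := by
    intro I hI
    have hs : (∑ j, I j) = n + 1 := (Finset.Nat.mem_antidiagonalTuple.mp hI)
    rw [← Finset.sum_mul, ← Finset.sum_div]
    rw [show ∑ j : Fin 3, (I j : ℝ) = ((n : ℝ) + 1) by exact_mod_cast congrArg Nat.cast hs]
    rw [div_self (by positivity), one_mul]
  rw [Finset.sum_congr rfl hrhs]
  rw [← Finset.sum_product', ← Finset.sum_product']
  rw [← Finset.sum_filter_add_sum_filter_not (Finset.Nat.antidiagonalTuple 3 (n+1) ×ˢ Finset.univ)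
    (fun p => p.1 p.2 ≠ 0)]
  have hzero : ∑ p ∈ (Finset.Nat.antidiagonalTuple 3 (n+1) ×ˢ Finset.univ).filter
      (fun p => ¬ p.1 p.2 ≠ 0),
      ((p.1 p.2 : ℝ) / (n + 1)) *
        ((Nat.multinomial Finset.univ p.1 : ℝ) * (∏ k, c k ^ p.1 k) * T p.1) = 0 := by
    apply Finset.sum_eq_zero
    intro p hp
    have h0 : p.1 p.2 = 0 := by simpa using (Finset.mem_filter.mp hp).2
    rw [h0]
    simp
  rw [hzero, add_zero]
  apply Finset.sum_nbij' (i := fun p => (p.1 + (e₃ p.2), p.2))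
    (j := fun q => (q.1 - (e₃ q.2), q.2))
  · intro p hp
    have hp1 : ∑ k, p.1 k = n := Finset.Nat.mem_antidiagonalTuple.mp (Finset.mem_product.mp hp).1
    refine Finset.mem_filter.mpr ⟨Finset.mem_product.mpr ⟨?_, Finset.mem_univ _⟩, ?_⟩
    · refine Finset.Nat.mem_antidiagonalTuple.mpr ?_
      show ∑ k, (p.1 + (e₃ p.2)) k = n + 1
      simp only [Pi.add_apply]
      rw [Finset.sum_add_distrib, hp1]
      simp
    · show (p.1 + (e₃ p.2)) p.2 ≠ 0
      simp
  · rintro ⟨I, j⟩ hq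
    obtain ⟨hq1, hq2⟩ := Finset.mem_filter.mp hq
    have hq1' : ∑ k, I k = n + 1 :=
      Finset.Nat.mem_antidiagonalTuple.mp (Finset.mem_product.mp hq1).1
    have hpos : 1 ≤ I j := Nat.one_le_iff_ne_zero.mpr (by simpa using hq2)
    refine Finset.mem_product.mpr ⟨Finset.Nat.mem_antidiagonalTuple.mpr ?_, Finset.mem_univ _⟩
    show ∑ k, (I - (e₃ j)) k = n
    simp only [Pi.sub_apply]
    rw [Fin.sum_univ_three] at hq1' ⊢
    fin_cases j <;> simp_all <;> omega
  · intro p hp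
    have : (p.1 + (e₃ p.2)) - (e₃ p.2) = p.1 := by
      ext k
      show (p.1 k + (e₃ p.2) k) - (e₃ p.2) k = p.1 k
      omega
    simp only [this]
  · intro q hq
    obtain ⟨hq1, hq2⟩ := Finset.mem_filter.mp hq
    have hpos : 1 ≤ q.1 q.2 := Nat.one_le_iff_ne_zero.mpr (by simpa using hq2)
    have : (q.1 - (e₃ q.2)) + (e₃ q.2) = q.1 := by
      ext k
      show (q.1 k - (e₃ q.2) k) + (e₃ q.2) k = q.1 k
      by_cases hk : k = q.2
      · subst hk
        simp only [Pi.single_eq_same]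
        exact Nat.sub_add_cancel hpos
      · simp [Pi.single_eq_of_ne hk]
    simp only [this]
  · intro p hp
    have hp1 : ∑ k, p.1 k = n := Finset.Nat.mem_antidiagonalTuple.mp (Finset.mem_product.mp hp).1
    show (Nat.multinomial Finset.univ p.1 : ℝ) * (∏ k, c k ^ p.1 k) * c p.2 * T (p.1 + (e₃ p.2))
      = (((p.1 + (e₃ p.2)) p.2 : ℝ) / (n + 1)) *
        ((Nat.multinomial Finset.univ (p.1 + (e₃ p.2)) : ℝ) *
          (∏ k, c k ^ (p.1 + (e₃ p.2)) k) * T (p.1 + (e₃ p.2)))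
    have hps : (((p.1 + (e₃ p.2)) p.2 : ℕ) : ℝ) = (p.1 p.2 : ℝ) + 1 := by
      have : (p.1 + (e₃ p.2)) p.2 = p.1 p.2 + 1 := by simp
      rw [this]; push_cast; ring
    have hpas : ((p.1 p.2 : ℝ) + 1) * (Nat.multinomial Finset.univ (p.1 + (e₃ p.2)) : ℝ)
        = ((n : ℝ) + 1) * (Nat.multinomial Finset.univ p.1 : ℝ) := by
      have h := pascal p.1 p.2
      rw [hp1] at h
      exact_mod_cast congrArg Nat.cast h
    have hn1 : ((n : ℝ) + 1) ≠ 0 := by positivity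
    have hcoef : ((p.1 p.2 : ℝ) + 1) / ((n : ℝ) + 1) *
        (Nat.multinomial Finset.univ (p.1 + (e₃ p.2)) : ℝ)
        = (Nat.multinomial Finset.univ p.1 : ℝ) := by
      rw [div_mul_eq_mul_div, hpas]
      exact mul_div_cancel_left₀ _ hn1
    rw [hps, pow_prod_single]
    calc (Nat.multinomial Finset.univ p.1 : ℝ) * (∏ k, c k ^ p.1 k) * c p.2 * T (p.1 + (e₃ p.2))
        = (((p.1 p.2 : ℝ) + 1) / ((n : ℝ) + 1) *
            (Nat.multinomial Finset.univ (p.1 + (e₃ p.2)) : ℝ)) *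
            (∏ k, c k ^ p.1 k) * c p.2 * T (p.1 + (e₃ p.2)) := by rw [hcoef]
      _ = ((p.1 p.2 : ℝ) + 1) / (↑n + 1) *
            ((Nat.multinomial Finset.univ (p.1 + (e₃ p.2)) : ℝ) *
              (c p.2 * ∏ k, c k ^ p.1 k) * T (p.1 + (e₃ p.2))) := by ring

end Comb

section Main
set_option linter.unusedVariables false
variable {E F : Type*} [NormedAddCommGroup E] [NormedSpace ℝ E]
  [NormedAddCommGroup F] [NormedSpace ℝ F] {U : Set E}

noncomputable def Dmix (w : Fin 3 → E) (i : Fin 3 → ℕ) (f : E → ℝ) : E → ℝ :=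
  (dirDeriv (w 0))^[i 0] ((dirDeriv (w 1))^[i 1] ((dirDeriv (w 2))^[i 2] f))

lemma Dmix_smooth (hU : IsOpen U) (w : Fin 3 → E) (i : Fin 3 → ℕ) {f : E → ℝ} {r : ℕ}
    (hf : ContDiffOn ℝ (r + i 0 + i 1 + i 2 : ℕ) f U) :
    ContDiffOn ℝ (r : ℕ) (Dmix w i f) U := by
  apply contDiffOn_dirDeriv_iter hU _ (i 0)
  apply contDiffOn_dirDeriv_iter hU _ (i 1)
  apply contDiffOn_dirDeriv_iter hU _ (i 2)
  have h : r + i 0 + i 1 + i 2 = r + i 0 + i 1 + i 2 := rfl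
  exact cdo_mono hf (by omega)

lemma Dmix_congr {f g : E → ℝ} (w : Fin 3 → E) (i : Fin 3 → ℕ) (hU : IsOpen U)
    (h : Set.EqOn f g U) : Set.EqOn (Dmix w i f) (Dmix w i g) U := by
  unfold Dmix
  exact iter_congr _ hU (iter_congr _ hU (iter_congr _ hU h (i 2)) (i 1)) (i 0)

lemma Dmix_step (hU : IsOpen U) (w : Fin 3 → E) (i : Fin 3 → ℕ) (j : Fin 3) {f : E → ℝ}
    (hf : ContDiffOn ℝ (i 0 + i 1 + i 2 + 1 : ℕ) f U) {x : E} (hx : x ∈ U) :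
    dirDeriv (w j) (Dmix w i f) x = Dmix w (i + (e₃ j)) f x := by
  have h20 : ((i + (e₃ j)) : Fin 3 → ℕ) 0 = i 0 + (e₃ j) 0 := rfl
  fin_cases j
  · show dirDeriv (w 0) (Dmix w i f) x = Dmix w (i + (e₃ (0 : Fin 3))) f x
    unfold Dmix
    rw [show ((i + (e₃ (0:Fin 3))) : Fin 3 → ℕ) 0 = i 0 + 1 by simp,
      show ((i + (e₃ (0:Fin 3))) : Fin 3 → ℕ) 1 = i 1 by
        simp [Pi.single_eq_of_ne (by decide : (1 : Fin 3) ≠ 0)],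
      show ((i + (e₃ (0:Fin 3))) : Fin 3 → ℕ) 2 = i 2 by
        simp [Pi.single_eq_of_ne (by decide : (2 : Fin 3) ≠ 0)]]
    rw [Function.iterate_succ_apply']
  · show dirDeriv (w 1) (Dmix w i f) x = Dmix w (i + (e₃ (1 : Fin 3))) f x
    unfold Dmix
    rw [show ((i + (e₃ (1:Fin 3))) : Fin 3 → ℕ) 0 = i 0 by
        simp [Pi.single_eq_of_ne (by decide : (0 : Fin 3) ≠ 1)],
      show ((i + (e₃ (1:Fin 3))) : Fin 3 → ℕ) 1 = i 1 + 1 by simp,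
      show ((i + (e₃ (1:Fin 3))) : Fin 3 → ℕ) 2 = i 2 by
        simp [Pi.single_eq_of_ne (by decide : (2 : Fin 3) ≠ 1)]]
    have hA : ContDiffOn ℝ (i 0 + 1 : ℕ) ((dirDeriv (w 1))^[i 1] ((dirDeriv (w 2))^[i 2] f)) U := by
      apply contDiffOn_dirDeriv_iter hU _ (i 1)
      apply contDiffOn_dirDeriv_iter hU _ (i 2)
      exact cdo_mono hf (by omega)
    rw [dirDeriv_comm_iter hU (w 1) (w 0) (i 0) hA hx]
    have : dirDeriv (w 1) ((dirDeriv (w 1))^[i 1] ((dirDeriv (w 2))^[i 2] f))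
        = (dirDeriv (w 1))^[i 1 + 1] ((dirDeriv (w 2))^[i 2] f) :=
      (Function.iterate_succ_apply' (dirDeriv (w 1)) (i 1) _).symm
    rw [this]
  · show dirDeriv (w 2) (Dmix w i f) x = Dmix w (i + (e₃ (2 : Fin 3))) f x
    unfold Dmix
    rw [show ((i + (e₃ (2:Fin 3))) : Fin 3 → ℕ) 0 = i 0 by
        simp [Pi.single_eq_of_ne (by decide : (0 : Fin 3) ≠ 2)],
      show ((i + (e₃ (2:Fin 3))) : Fin 3 → ℕ) 1 = i 1 by
        simp [Pi.single_eq_of_ne (by decide : (1 : Fin 3) ≠ 2)],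
      show ((i + (e₃ (2:Fin 3))) : Fin 3 → ℕ) 2 = i 2 + 1 by simp]
    have hA : ContDiffOn ℝ (i 0 + 1 : ℕ) ((dirDeriv (w 1))^[i 1] ((dirDeriv (w 2))^[i 2] f)) U := by
      apply contDiffOn_dirDeriv_iter hU _ (i 1)
      apply contDiffOn_dirDeriv_iter hU _ (i 2)
      exact cdo_mono hf (by omega)
    rw [dirDeriv_comm_iter hU (w 2) (w 0) (i 0) hA hx]
    have hC : ContDiffOn ℝ (i 1 + 1 : ℕ) ((dirDeriv (w 2))^[i 2] f) U := by
      apply contDiffOn_dirDeriv_iter hU _ (i 2)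
      exact cdo_mono hf (by omega)
    have e2 : Set.EqOn (dirDeriv (w 2) ((dirDeriv (w 1))^[i 1] ((dirDeriv (w 2))^[i 2] f)))
        ((dirDeriv (w 1))^[i 1] ((dirDeriv (w 2))^[i 2 + 1] f)) U := by
      intro y hy
      rw [dirDeriv_comm_iter hU (w 2) (w 1) (i 1) hC hy]
      have : dirDeriv (w 2) ((dirDeriv (w 2))^[i 2] f) = (dirDeriv (w 2))^[i 2 + 1] f :=
        (Function.iterate_succ_apply' (dirDeriv (w 2)) (i 2) f).symm
      rw [this]
    exact iter_congr (w 0) hU e2 (i 0) hx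

lemma expand (hU : IsOpen U) (w : Fin 3 → E) (c : Fin 3 → ℝ) (n : ℕ) {f : E → ℝ}
    (hf : ContDiffOn ℝ (n : ℕ) f U) :
    Set.EqOn ((dirDeriv (∑ j, c j • w j))^[n] f)
      (fun x => ∑ i ∈ Finset.Nat.antidiagonalTuple 3 n,
        (Nat.multinomial Finset.univ i : ℝ) * (∏ k, c k ^ i k) * Dmix w i f x) U := by
  induction n generalizing f with
  | zero =>
    intro x hx
    simp [Finset.Nat.antidiagonalTuple_zero_right, Dmix, Nat.multinomial]
  | succ n ih =>
    intro x hx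
    rw [Function.iterate_succ_apply']
    have hf' : ContDiffOn ℝ (n : ℕ) f U := cdo_mono hf (by omega)
    rw [dirDeriv_congr _ hU (ih hf') hx]
    have hdiff : ∀ i ∈ Finset.Nat.antidiagonalTuple 3 n, DifferentiableAt ℝ (Dmix w i f) x := by
      intro i hi
      have hs : i 0 + i 1 + i 2 = n := by
        have := Finset.Nat.mem_antidiagonalTuple.mp hi
        rw [Fin.sum_univ_three] at this
        omega
      refine diffAt_of_contDiffOn hU le_rfl (Dmix_smooth hU w i ?_) hx
      exact cdo_mono hf (by omega)
    rw [dirDeriv_sum (Finset.Nat.antidiagonalTuple 3 n)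
      (fun i => (Nat.multinomial Finset.univ i : ℝ) * ∏ k, c k ^ i k)
      (fun i => Dmix w i f) _ hdiff]
    have hstep : ∀ i ∈ Finset.Nat.antidiagonalTuple 3 n,
        ((Nat.multinomial Finset.univ i : ℝ) * ∏ k, c k ^ i k) *
            dirDeriv (∑ j, c j • w j) (Dmix w i f) x
          = ∑ j : Fin 3, (Nat.multinomial Finset.univ i : ℝ) * (∏ k, c k ^ i k) * c j *
              Dmix w (i + (e₃ j)) f x := by
      intro i hi
      have hs : i 0 + i 1 + i 2 = n := by
        have := Finset.Nat.mem_antidiagonalTuple.mp hi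
        rw [Fin.sum_univ_three] at this
        omega
      rw [dirDeriv_dir_sum w c (Dmix w i f) x, Finset.mul_sum]
      refine Finset.sum_congr rfl fun j _ => ?_
      rw [Dmix_step hU w i j (cdo_mono hf (by omega)) hx]
      ring
    rw [Finset.sum_congr rfl hstep]
    exact comb n c (fun I => Dmix w I f x)

lemma Dmix_sum (hU : IsOpen U) (w : Fin 3 → E) (i : Fin 3 → ℕ) {ι : Type*} (s : Finset ι)
    (c : ι → ℝ) (h : ι → E → ℝ)
    (hh : ∀ a ∈ s, ContDiffOn ℝ (i 0 + i 1 + i 2 : ℕ) (h a) U) :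
    Set.EqOn (Dmix w i (fun z => ∑ a ∈ s, c a * h a z))
      (fun z => ∑ a ∈ s, c a * Dmix w i (h a) z) U := by
  intro x hx
  unfold Dmix
  have e2 : Set.EqOn ((dirDeriv (w 2))^[i 2] (fun z => ∑ a ∈ s, c a * h a z))
      (fun z => ∑ a ∈ s, c a * (dirDeriv (w 2))^[i 2] (h a) z) U :=
    iter_sum hU (w 2) (i 2) s c h (fun a ha => cdo_mono (hh a ha) (by omega))
  rw [iter_congr (w 0) hU (iter_congr (w 1) hU e2 (i 1)) (i 0) hx]
  have e1 : Set.EqOn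
      ((dirDeriv (w 1))^[i 1] (fun z => ∑ a ∈ s, c a * (dirDeriv (w 2))^[i 2] (h a) z))
      (fun z => ∑ a ∈ s, c a * (dirDeriv (w 1))^[i 1] ((dirDeriv (w 2))^[i 2] (h a)) z) U :=
    iter_sum hU (w 1) (i 1) s c (fun a => (dirDeriv (w 2))^[i 2] (h a))
      (fun a ha => contDiffOn_dirDeriv_iter hU _ (i 2) (cdo_mono (hh a ha) (by omega)))
  rw [iter_congr (w 0) hU e1 (i 0) hx]
  exact iter_sum hU (w 0) (i 0) s c
    (fun a => (dirDeriv (w 1))^[i 1] ((dirDeriv (w 2))^[i 2] (h a)))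
    (fun a ha => contDiffOn_dirDeriv_iter hU _ (i 1)
      (contDiffOn_dirDeriv_iter hU _ (i 2) (cdo_mono (hh a ha) (by omega)))) hx

lemma Dmix_Dmix (hU : IsOpen U) (w : Fin 3 → E) (i j : Fin 3 → ℕ) {f : E → ℝ}
    (hf : ContDiffOn ℝ (i 0 + i 1 + i 2 + j 0 + j 1 + j 2 : ℕ) f U) {x : E} (hx : x ∈ U) :
    Dmix w i (Dmix w j f) x = Dmix w (i + j) f x := by
  unfold Dmix
  have ea : Set.EqOn
      ((dirDeriv (w 2))^[i 2] ((dirDeriv (w 0))^[j 0]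
        ((dirDeriv (w 1))^[j 1] ((dirDeriv (w 2))^[j 2] f))))
      ((dirDeriv (w 0))^[j 0] ((dirDeriv (w 2))^[i 2]
        ((dirDeriv (w 1))^[j 1] ((dirDeriv (w 2))^[j 2] f)))) U :=
    dirDeriv_iter_comm hU (w 2) (w 0) (i 2) (j 0)
      (contDiffOn_dirDeriv_iter hU _ (j 1)
        (contDiffOn_dirDeriv_iter hU _ (j 2) (cdo_mono hf (by omega))))
  rw [iter_congr (w 0) hU (iter_congr (w 1) hU ea (i 1)) (i 0) hx]
  have eb : Set.EqOn
      ((dirDeriv (w 2))^[i 2] ((dirDeriv (w 1))^[j 1] ((dirDeriv (w 2))^[j 2] f)))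
      ((dirDeriv (w 1))^[j 1] ((dirDeriv (w 2))^[i 2] ((dirDeriv (w 2))^[j 2] f))) U :=
    dirDeriv_iter_comm hU (w 2) (w 1) (i 2) (j 1)
      (contDiffOn_dirDeriv_iter hU _ (j 2) (cdo_mono hf (by omega)))
  rw [iter_congr (w 0) hU (iter_congr (w 1) hU (iter_congr (w 0) hU eb (j 0)) (i 1)) (i 0) hx]
  rw [← Function.iterate_add_apply (dirDeriv (w 2)) (i 2) (j 2) f]
  have ed : Set.EqOn
      ((dirDeriv (w 1))^[i 1] ((dirDeriv (w 0))^[j 0]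
        ((dirDeriv (w 1))^[j 1] ((dirDeriv (w 2))^[i 2 + j 2] f))))
      ((dirDeriv (w 0))^[j 0] ((dirDeriv (w 1))^[i 1]
        ((dirDeriv (w 1))^[j 1] ((dirDeriv (w 2))^[i 2 + j 2] f)))) U :=
    dirDeriv_iter_comm hU (w 1) (w 0) (i 1) (j 0)
      (contDiffOn_dirDeriv_iter hU _ (j 1)
        (contDiffOn_dirDeriv_iter hU _ (i 2 + j 2) (cdo_mono hf (by omega))))
  rw [iter_congr (w 0) hU ed (i 0) hx]
  rw [← Function.iterate_add_apply (dirDeriv (w 1)) (i 1) (j 1)]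
  rw [← Function.iterate_add_apply (dirDeriv (w 0)) (i 0) (j 0)]
  rfl


lemma Dmix_comp {E : Type*} [NormedAddCommGroup E] [NormedSpace ℝ E] {U : Set E}
    (hU : IsOpen U) (L : (Fin 3 → ℝ) →L[ℝ] E) (K : Fin 3 → ℕ) {f : E → ℝ}
    (hf : ContDiffOn ℝ (K 0 + K 1 + K 2 : ℕ) f U) {b : Fin 3 → ℝ} (hb : L b ∈ U) :
    Dmix (fun j => (Pi.single j 1 : Fin 3 → ℝ)) K (f ∘ L) b
      = Dmix (fun j => L (Pi.single j 1)) K f (L b) := by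
  have hUo : IsOpen (L ⁻¹' U) := hU.preimage L.continuous
  unfold Dmix
  have e2 : Set.EqOn
      ((dirDeriv (Pi.single 2 1 : Fin 3 → ℝ))^[K 2] (f ∘ L))
      (((dirDeriv (L (Pi.single 2 1)))^[K 2] f) ∘ L) (L ⁻¹' U) := fun y hy =>
    dirDeriv_iter_comp hU L _ (K 2) (cdo_mono hf (by omega)) hy
  rw [iter_congr _ hUo (iter_congr _ hUo e2 (K 1)) (K 0) hb]
  have e1 : Set.EqOn
      ((dirDeriv (Pi.single 1 1 : Fin 3 → ℝ))^[K 1]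
        (((dirDeriv (L (Pi.single 2 1)))^[K 2] f) ∘ L))
      (((dirDeriv (L (Pi.single 1 1)))^[K 1] ((dirDeriv (L (Pi.single 2 1)))^[K 2] f)) ∘ L)
      (L ⁻¹' U) := fun y hy =>
    dirDeriv_iter_comp hU L _ (K 1)
      (contDiffOn_dirDeriv_iter hU _ (K 2) (cdo_mono hf (by omega))) hy
  rw [iter_congr _ hUo e1 (K 0) hb]
  exact dirDeriv_iter_comp hU L _ (K 0)
    (contDiffOn_dirDeriv_iter hU _ (K 1)
      (contDiffOn_dirDeriv_iter hU _ (K 2) (cdo_mono hf (by omega)))) hb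


/-- for `f` of class `C^m` (`m = m1 + m2 ≥ 1`) on an open set `U ⊆ ℝ²`,
`x ∈ U` with barycentric coordinates `β`, and `α₁, α₂ ∈ ℝ³` the directional
coordinates of the standard basis vectors `e1 = (1,0)`, `e2 = (0,1)`, the mixed
partial derivative `∂^m f/(∂x1^{m1} ∂x2^{m2})` at `x` equals
`∑_{|i₁| = m1} ∑_{|i₂| = m2} (m1 choose i₁)(m2 choose i₂) α₁^{i₁} α₂^{i₂}
  (∂^m g/∂b^{i₁+i₂})(β)`, where `g = f ∘ L`. -/
theorem mixed_partial_derivative_formula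
    (p1 p2 p3 : ℝ × ℝ)
    (hind : AffineIndependent ℝ ![p1, p2, p3])
    (m1 m2 : ℕ) (hm : 1 ≤ m1 + m2)
    (U : Set (ℝ × ℝ)) (hU : IsOpen U)
    (f : ℝ × ℝ → ℝ) (hf : ContDiffOn ℝ (m1 + m2) f U)
    (x : ℝ × ℝ) (hx : x ∈ U)
    (β : Fin 3 → ℝ)
    (hβx : x = β 0 • p1 + β 1 • p2 + β 2 • p3)
    (hβ1 : β 0 + β 1 + β 2 = 1)
    (α₁ α₂ : Fin 3 → ℝ)
    (hα₁ : ((1 : ℝ), (0 : ℝ)) = α₁ 0 • p1 + α₁ 1 • p2 + α₁ 2 • p3)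
    (hα₁0 : α₁ 0 + α₁ 1 + α₁ 2 = 0)
    (hα₂ : ((0 : ℝ), (1 : ℝ)) = α₂ 0 • p1 + α₂ 1 • p2 + α₂ 2 • p3)
    (hα₂0 : α₂ 0 + α₂ 1 + α₂ 2 = 0) :
    ((dirDeriv ((1 : ℝ), (0 : ℝ)))^[m1] ((dirDeriv ((0 : ℝ), (1 : ℝ)))^[m2] f)) x =
      ∑ i₁ ∈ Finset.Nat.antidiagonalTuple 3 m1,
        ∑ i₂ ∈ Finset.Nat.antidiagonalTuple 3 m2,
          (Nat.multinomial Finset.univ i₁ : ℝ) * (Nat.multinomial Finset.univ i₂ : ℝ) *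
          (∏ j, α₁ j ^ i₁ j) * (∏ j, α₂ j ^ i₂ j) *
          ((dirDeriv (Pi.single 0 1 : Fin 3 → ℝ))^[i₁ 0 + i₂ 0]
            ((dirDeriv (Pi.single 1 1 : Fin 3 → ℝ))^[i₁ 1 + i₂ 1]
              ((dirDeriv (Pi.single 2 1 : Fin 3 → ℝ))^[i₁ 2 + i₂ 2]
                (fun b : Fin 3 → ℝ => f (b 0 • p1 + b 1 • p2 + b 2 • p3))))) β := by
  have hf' : ContDiffOn ℝ ((m1 + m2 : ℕ) : WithTop ℕ∞) f U := by exact_mod_cast hf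
  set w : Fin 3 → ℝ × ℝ := ![p1, p2, p3] with hw
  have hw0 : w 0 = p1 := rfl
  have hw1 : w 1 = p2 := rfl
  have hw2 : w 2 = p3 := rfl
  set L : (Fin 3 → ℝ) →L[ℝ] (ℝ × ℝ) :=
    (ContinuousLinearMap.proj 0).smulRight p1 + (ContinuousLinearMap.proj 1).smulRight p2 +
      (ContinuousLinearMap.proj 2).smulRight p3 with hL
  have hLb : ∀ b : Fin 3 → ℝ, L b = b 0 • p1 + b 1 • p2 + b 2 • p3 := by
    intro b
    simp [hL, ContinuousLinearMap.add_apply, ContinuousLinearMap.smulRight_apply,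
      ContinuousLinearMap.proj_apply]
  have hLx : L β = x := by rw [hLb]; exact hβx.symm
  have hLβU : L β ∈ U := by rw [hLx]; exact hx
  have hLσ : (fun j => L (Pi.single j 1)) = w := by
    funext j
    fin_cases j <;> · rw [hLb]; simp [hw0, hw1, hw2]
  have hg : (fun b : Fin 3 → ℝ => f (b 0 • p1 + b 1 • p2 + b 2 • p3)) = f ∘ ⇑L := by
    funext b
    simp [Function.comp, hLb b]
  have hv1 : ((1 : ℝ), (0 : ℝ)) = ∑ j, α₁ j • w j := by
    rw [Fin.sum_univ_three, hw0, hw1, hw2]; exact hα₁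
  have hv2 : ((0 : ℝ), (1 : ℝ)) = ∑ j, α₂ j • w j := by
    rw [Fin.sum_univ_three, hw0, hw1, hw2]; exact hα₂
  rw [hg, hv1, hv2]
  have hF : ContDiffOn ℝ (m1 : ℕ) ((dirDeriv (∑ j, α₂ j • w j))^[m2] f) U :=
    contDiffOn_dirDeriv_iter hU _ m2 hf'
  rw [expand hU w α₁ m1 hF hx]
  refine Finset.sum_congr rfl fun i₁ hi₁ => ?_
  have hs1 : i₁ 0 + i₁ 1 + i₁ 2 = m1 := by
    have := Finset.Nat.mem_antidiagonalTuple.mp hi₁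
    rw [Fin.sum_univ_three] at this; omega
  have hFS : Set.EqOn ((dirDeriv (∑ j, α₂ j • w j))^[m2] f)
      (fun z => ∑ i₂ ∈ Finset.Nat.antidiagonalTuple 3 m2,
        (Nat.multinomial Finset.univ i₂ : ℝ) * (∏ k, α₂ k ^ i₂ k) * Dmix w i₂ f z) U :=
    expand hU w α₂ m2 (cdo_mono hf' (by omega))
  have hDsum : Dmix w i₁ ((dirDeriv (∑ j, α₂ j • w j))^[m2] f) x
      = ∑ i₂ ∈ Finset.Nat.antidiagonalTuple 3 m2,
          ((Nat.multinomial Finset.univ i₂ : ℝ) * ∏ k, α₂ k ^ i₂ k) *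
            Dmix w i₁ (Dmix w i₂ f) x := by
    rw [Dmix_congr w i₁ hU hFS hx]
    exact Dmix_sum hU w i₁ (Finset.Nat.antidiagonalTuple 3 m2)
      (fun i₂ => (Nat.multinomial Finset.univ i₂ : ℝ) * ∏ k, α₂ k ^ i₂ k)
      (fun i₂ => Dmix w i₂ f)
      (fun i₂ hi₂ => by
        have hs2 : i₂ 0 + i₂ 1 + i₂ 2 = m2 := by
          have := Finset.Nat.mem_antidiagonalTuple.mp hi₂
          rw [Fin.sum_univ_three] at this; omega
        exact Dmix_smooth hU w i₂ (cdo_mono hf' (by omega))) hx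
  rw [hDsum, Finset.mul_sum]
  refine Finset.sum_congr rfl fun i₂ hi₂ => ?_
  have hs2 : i₂ 0 + i₂ 1 + i₂ 2 = m2 := by
    have := Finset.Nat.mem_antidiagonalTuple.mp hi₂
    rw [Fin.sum_univ_three] at this; omega
  have hmerge : Dmix w i₁ (Dmix w i₂ f) x = Dmix w (i₁ + i₂) f x :=
    Dmix_Dmix hU w i₁ i₂ (cdo_mono hf' (by omega)) hx
  have hbig : (dirDeriv (Pi.single 0 1 : Fin 3 → ℝ))^[i₁ 0 + i₂ 0]
      ((dirDeriv (Pi.single 1 1 : Fin 3 → ℝ))^[i₁ 1 + i₂ 1]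
        ((dirDeriv (Pi.single 2 1 : Fin 3 → ℝ))^[i₁ 2 + i₂ 2] (f ∘ ⇑L))) β
      = Dmix w (i₁ + i₂) f x := by
    have h1 : (dirDeriv (Pi.single 0 1 : Fin 3 → ℝ))^[i₁ 0 + i₂ 0]
        ((dirDeriv (Pi.single 1 1 : Fin 3 → ℝ))^[i₁ 1 + i₂ 1]
          ((dirDeriv (Pi.single 2 1 : Fin 3 → ℝ))^[i₁ 2 + i₂ 2] (f ∘ ⇑L))) β
        = Dmix (fun j => (Pi.single j 1 : Fin 3 → ℝ)) (i₁ + i₂) (f ∘ ⇑L) β := rfl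
    rw [h1, Dmix_comp hU L (i₁ + i₂)
      (cdo_mono hf' (by simp only [Pi.add_apply]; omega)) hLβU, hLσ, hLx]
  rw [hmerge, ← hbig]
  ring

end Main
end

section
/- For all β = (β1, β2, β3) ∈ ℝ³ and β' = (β'1, β'2, β'3) ∈ ℝ³ with β1 + β2 + β3 = 1 and β'1 + β'2 + β'3 = 1, the matrix identity R2(β)·R3(β') = R2(β')·R3(β) holds. -/
/-- The 12×10 recursion matrix `R1` (with `γj = 2 βj − c`; the paper's `R1` is `c = 1`,
the derivative matrix `U1` is `c = 0`). -/
noncomputable def R1g (b1 b2 b3 c : ℝ) : Matrix (Fin 12) (Fin 10) ℝ :=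
  !![2*b1 - c, 0, 0, 0, 0, 2*(b3 - b2), 4*b2, 0, 0, 0;
     2*b1 - c, 0, 0, 2*(b2 - b3), 0, 0, 4*b3, 0, 0, 0;
     0, 2*b2 - c, 0, 2*(b1 - b3), 0, 0, 0, 4*b3, 0, 0;
     0, 2*b2 - c, 0, 0, 2*(b3 - b1), 0, 0, 4*b1, 0, 0;
     0, 0, 2*b3 - c, 0, 2*(b2 - b1), 0, 0, 0, 4*b1, 0;
     0, 0, 2*b3 - c, 0, 0, 2*(b1 - b2), 0, 0, 4*b2, 0;
     0, 0, 0, 0, 0, 2*(b3 - b2), 4*(b1 - b3), 0, 0, -3*(2*b1 - c);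
     0, 0, 0, 2*(b2 - b3), 0, 0, 4*(b1 - b2), 0, 0, -3*(2*b1 - c);
     0, 0, 0, 2*(b1 - b3), 0, 0, 0, 4*(b2 - b1), 0, -3*(2*b2 - c);
     0, 0, 0, 0, 2*(b3 - b1), 0, 0, 4*(b2 - b3), 0, -3*(2*b2 - c);
     0, 0, 0, 0, 2*(b2 - b1), 0, 0, 0, 4*(b3 - b2), -3*(2*b3 - c);
     0, 0, 0, 0, 0, 2*(b1 - b2), 0, 0, 4*(b3 - b1), -3*(2*b3 - c)]

/-- The 10×12 recursion matrix `R2` (with `γj = 2 βj − c`). -/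
noncomputable def R2g (b1 b2 b3 c : ℝ) : Matrix (Fin 10) (Fin 12) ℝ :=
  !![2*b1 - c, 2*b2, 0, 0, 0, 0, 0, 0, 0, 0, 0, 2*b3;
     0, 0, 0, 2*b1, 2*b2 - c, 2*b3, 0, 0, 0, 0, 0, 0;
     0, 0, 0, 0, 0, 0, 0, 2*b2, 2*b3 - c, 2*b1, 0, 0;
     0, b1 - b3, 3*b3, b2 - b3, 0, 0, 0, 0, 0, 0, 0, 0;
     0, 0, 0, 0, 0, b2 - b1, 3*b1, b3 - b1, 0, 0, 0, 0;
     0, 0, 0, 0, 0, 0, 0, 0, 0, b3 - b2, 3*b2, b1 - b2;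
     0, (b1 - b3)/2, 3*b2/2, 0, 0, 0, 0, 0, 0, 0, 3*b3/2, (b1 - b2)/2;
     0, 0, 3*b1/2, (b2 - b3)/2, 0, (b2 - b1)/2, 3*b3/2, 0, 0, 0, 0, 0;
     0, 0, 0, 0, 0, 0, 3*b2/2, (b3 - b1)/2, 0, (b3 - b2)/2, 3*b1/2, 0;
     0, 0, -(2*b3 - c), 0, 0, 0, -(2*b1 - c), 0, 0, 0, -(2*b2 - c), 0]

/-- The 12×16 recursion matrix `R3` (with `γj = 2 βj − c`). -/
noncomputable def R3g (b1 b2 b3 c : ℝ) : Matrix (Fin 12) (Fin 16) ℝ :=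
  !![2*b1 - c, 2*b2, 0, 0, 0, 0, 0, 0, 0, 0, 0, 2*b3, 0, 0, 0, 0;
     0, b1 - b3, b2, 0, 0, 0, 0, 0, 0, 0, 0, 0, 2*b3, 0, 0, 0;
     0, 0, (b1 + b2)/3, 0, 0, 0, b3/3, 0, 0, 0, b3/3, 0, 2*b1/3, 2*b2/3, 0, b3/3;
     0, 0, b1, b2 - b3, 0, 0, 0, 0, 0, 0, 0, 0, 0, 2*b3, 0, 0;
     0, 0, 0, 2*b1, 2*b2 - c, 2*b3, 0, 0, 0, 0, 0, 0, 0, 0, 0, 0;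
     0, 0, 0, 0, 0, b2 - b1, b3, 0, 0, 0, 0, 0, 0, 2*b1, 0, 0;
     0, 0, b1/3, 0, 0, 0, (b2 + b3)/3, 0, 0, 0, b1/3, 0, 0, 2*b2/3, 2*b3/3, b1/3;
     0, 0, 0, 0, 0, 0, b2, b3 - b1, 0, 0, 0, 0, 0, 0, 2*b1, 0;
     0, 0, 0, 0, 0, 0, 0, 2*b2, 2*b3 - c, 2*b1, 0, 0, 0, 0, 0, 0;
     0, 0, 0, 0, 0, 0, 0, 0, 0, b3 - b2, b1, 0, 0, 0, 2*b2, 0;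
     0, 0, b2/3, 0, 0, 0, b2/3, 0, 0, 0, (b1 + b3)/3, 0, 2*b1/3, 0, 2*b3/3, b2/3;
     0, 0, 0, 0, 0, 0, 0, 0, 0, 0, b3, b1 - b2, 2*b2, 0, 0, 0]

/-- The recursion matrix `R1(β)`. -/
noncomputable def R1 (b1 b2 b3 : ℝ) : Matrix (Fin 12) (Fin 10) ℝ := R1g b1 b2 b3 1
/-- The recursion matrix `R2(β)`. -/
noncomputable def R2 (b1 b2 b3 : ℝ) : Matrix (Fin 10) (Fin 12) ℝ := R2g b1 b2 b3 1
/-- The recursion matrix `R3(β)`. -/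
noncomputable def R3 (b1 b2 b3 : ℝ) : Matrix (Fin 12) (Fin 16) ℝ := R3g b1 b2 b3 1

set_option maxHeartbeats 4000000 in
/-- for barycentric triples `β`, `β'` (components summing to 1),
`R2(β) R3(β') = R2(β') R3(β)`. -/
theorem R2_R3_commute (b1 b2 b3 b1' b2' b3' : ℝ)
    (hb : b1 + b2 + b3 = 1) (hb' : b1' + b2' + b3' = 1) :
    R2 b1 b2 b3 * R3 b1' b2' b3' = R2 b1' b2' b3' * R3 b1 b2 b3 := by
  have h3 : b3 = 1 - b1 - b2 := by linarith
  have h3' : b3' = 1 - b1' - b2' := by linarith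
  subst h3 h3'
  ext i j
  fin_cases i <;> fin_cases j <;>
    (simp only [R2, R3, R2g, R3g, Matrix.mul_apply, Fin.sum_univ_succ, Fin.sum_univ_zero,
      Matrix.cons_val_zero, Matrix.cons_val_succ, Matrix.cons_val_zero', Matrix.cons_val_succ',
      Matrix.of_apply, Matrix.cons_val', Matrix.empty_val']
     ring)
end

section
/- (Dual recursion, degree 1.) For all x, y ∈ ℝ², R1(β(x))·ψ1(y) = (1 − x·y)·𝟙, where 𝟙 ∈ ℝ^{12} is the all-ones vector and x·y is the Euclidean inner product. -/
/-- Euclidean inner product on `ℝ²`. -/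
def dotR2 (x y : ℝ × ℝ) : ℝ := x.1 * y.1 + x.2 * y.2

/-- The linear polynomial `c_p(y) = 1 − p·y` attached to a point `p`. -/
noncomputable def cpl (p y : ℝ × ℝ) : ℝ := 1 - dotR2 p y

set_option maxHeartbeats 2000000 in
/-- dual recursion, degree 1: `R1(β(x)) ψ1(y) = (1 − x·y) 𝟙`. -/
theorem dual_recursion_deg1
    (p1 p2 p3 : ℝ × ℝ)
    (hind : AffineIndependent ℝ ![p1, p2, p3])
    (p4 p5 p6 p7 p8 p9 p10 : ℝ × ℝ)
    (h4 : p4 = (2⁻¹ : ℝ) • (p1 + p2))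
    (h5 : p5 = (2⁻¹ : ℝ) • (p2 + p3))
    (h6 : p6 = (2⁻¹ : ℝ) • (p3 + p1))
    (h7 : p7 = (2⁻¹ : ℝ) • (p4 + p6))
    (h8 : p8 = (2⁻¹ : ℝ) • (p4 + p5))
    (h9 : p9 = (2⁻¹ : ℝ) • (p5 + p6))
    (h10 : p10 = (3⁻¹ : ℝ) • (p1 + p2 + p3))
    (x y : ℝ × ℝ) (b1 b2 b3 : ℝ)
    (hx : x = b1 • p1 + b2 • p2 + b3 • p3)
    (hb : b1 + b2 + b3 = 1) :
    (R1 b1 b2 b3).mulVec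
      ![cpl p1 y, cpl p2 y, cpl p3 y, cpl p4 y, cpl p5 y,
        cpl p6 y, cpl p7 y, cpl p8 y, cpl p9 y, cpl p10 y] =
      fun _ : Fin 12 => 1 - dotR2 x y := by
  have hb3 : b3 = 1 - b1 - b2 := by linarith
  subst hb3
  have hc : ∀ a b : ℝ × ℝ, cpl ((2⁻¹ : ℝ) • (a + b)) y = (cpl a y + cpl b y)/2 := by
    intro a b
    simp [cpl, dotR2, Prod.fst_add, Prod.snd_add, Prod.smul_fst, Prod.smul_snd, smul_eq_mul]
    ring
  have k4 := hc p1 p2; rw [← h4] at k4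
  have k5 := hc p2 p3; rw [← h5] at k5
  have k6 := hc p3 p1; rw [← h6] at k6
  have k7 := hc p4 p6; rw [← h7] at k7
  have k8 := hc p4 p5; rw [← h8] at k8
  have k9 := hc p5 p6; rw [← h9] at k9
  have k10 : cpl p10 y = (cpl p1 y + cpl p2 y + cpl p3 y)/3 := by
    simp [h10, cpl, dotR2, Prod.fst_add, Prod.snd_add, Prod.smul_fst, Prod.smul_snd, smul_eq_mul]
    ring
  have kx : 1 - dotR2 x y =
      b1 * cpl p1 y + b2 * cpl p2 y + (1 - b1 - b2) * cpl p3 y := by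
    simp [hx, cpl, dotR2, Prod.fst_add, Prod.snd_add, Prod.smul_fst, Prod.smul_snd, smul_eq_mul]
    ring
  funext i
  revert i
  simp only [R1, R1g, Matrix.cons_mulVec, Matrix.empty_mulVec, Matrix.cons_dotProduct,
    Matrix.dotProduct_of_isEmpty, Matrix.head_cons, Matrix.tail_cons,
    Fin.forall_fin_succ, IsEmpty.forall_iff, Matrix.cons_val_zero, Matrix.cons_val_succ,
    k7, k8, k9, k4, k5, k6, k10, kx, and_true]
  and_intros <;> ring
end

section
/- (Dual recursion, degree 2.) For all x, y ∈ ℝ², R2(β(x))·ψ2(y) = (1 − x·y)·ψ1(y), where x·y is the Euclidean inner product. -/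
set_option maxHeartbeats 2000000 in
/-- dual recursion, degree 2: `R2(β(x)) ψ2(y) = (1 − x·y) ψ1(y)`. -/
theorem dual_recursion_deg2
    (p1 p2 p3 : ℝ × ℝ)
    (hind : AffineIndependent ℝ ![p1, p2, p3])
    (p4 p5 p6 p7 p8 p9 p10 : ℝ × ℝ)
    (h4 : p4 = (2⁻¹ : ℝ) • (p1 + p2))
    (h5 : p5 = (2⁻¹ : ℝ) • (p2 + p3))
    (h6 : p6 = (2⁻¹ : ℝ) • (p3 + p1))
    (h7 : p7 = (2⁻¹ : ℝ) • (p4 + p6))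
    (h8 : p8 = (2⁻¹ : ℝ) • (p4 + p5))
    (h9 : p9 = (2⁻¹ : ℝ) • (p5 + p6))
    (h10 : p10 = (3⁻¹ : ℝ) • (p1 + p2 + p3))
    (x y : ℝ × ℝ) (b1 b2 b3 : ℝ)
    (hx : x = b1 • p1 + b2 • p2 + b3 • p3)
    (hb : b1 + b2 + b3 = 1) :
    (R2 b1 b2 b3).mulVec
      ![cpl p1 y ^ 2, cpl p1 y * cpl p4 y, cpl p4 y * cpl p10 y, cpl p2 y * cpl p4 y,
        cpl p2 y ^ 2, cpl p2 y * cpl p5 y, cpl p5 y * cpl p10 y, cpl p3 y * cpl p5 y,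
        cpl p3 y ^ 2, cpl p3 y * cpl p6 y, cpl p6 y * cpl p10 y, cpl p1 y * cpl p6 y]
      = (1 - dotR2 x y) •
      ![cpl p1 y, cpl p2 y, cpl p3 y, cpl p4 y, cpl p5 y,
        cpl p6 y, cpl p7 y, cpl p8 y, cpl p9 y, cpl p10 y]
      := by
  have key : ∀ (a b : ℝ) (p q : ℝ × ℝ), cpl ((a : ℝ) • p + (b : ℝ) • q) y
      = a * cpl p y + b * cpl q y + (1 - a - b) := by
    intro a b p q
    simp [cpl, dotR2, Prod.fst_add, Prod.snd_add, Prod.smul_fst, Prod.smul_snd]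
    ring
  have e4 : cpl p4 y = 2⁻¹ * cpl p1 y + 2⁻¹ * cpl p2 y := by
    rw [h4, smul_add, key]; ring
  have e5 : cpl p5 y = 2⁻¹ * cpl p2 y + 2⁻¹ * cpl p3 y := by
    rw [h5, smul_add, key]; ring
  have e6 : cpl p6 y = 2⁻¹ * cpl p3 y + 2⁻¹ * cpl p1 y := by
    rw [h6, smul_add, key]; ring
  have e7 : cpl p7 y = 2⁻¹ * cpl p4 y + 2⁻¹ * cpl p6 y := by
    rw [h7, smul_add, key]; ring
  have e8 : cpl p8 y = 2⁻¹ * cpl p4 y + 2⁻¹ * cpl p5 y := by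
    rw [h8, smul_add, key]; ring
  have e9 : cpl p9 y = 2⁻¹ * cpl p5 y + 2⁻¹ * cpl p6 y := by
    rw [h9, smul_add, key]; ring
  have e10 : cpl p10 y = 3⁻¹ * cpl p1 y + 3⁻¹ * cpl p2 y + 3⁻¹ * cpl p3 y := by
    rw [h10]
    simp [cpl, dotR2, Prod.fst_add, Prod.snd_add, Prod.smul_fst, Prod.smul_snd]
    ring
  have ex : 1 - dotR2 x y = b1 * cpl p1 y + b2 * cpl p2 y + b3 * cpl p3 y := by
    rw [hx]
    simp [cpl, dotR2, Prod.fst_add, Prod.snd_add, Prod.smul_fst, Prod.smul_snd]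
    nlinarith [hb]
  set c1 := cpl p1 y
  set c2 := cpl p2 y
  set c3 := cpl p3 y
  rw [ex]
  have hb3 : b3 = 1 - b1 - b2 := by linarith
  subst hb3
  simp only [R2, R2g, Matrix.cons_mulVec, Matrix.empty_mulVec, Matrix.cons_dotProduct,
    Matrix.dotProduct_of_isEmpty, Matrix.smul_cons, Matrix.smul_empty, smul_eq_mul,
    Matrix.head_cons, Matrix.tail_cons,
    Matrix.cons_val_zero, Matrix.cons_val_one, Matrix.head_cons, Matrix.of_apply,
    e4, e5, e6, e7, e8, e9, e10, add_zero]
  simp only [show ∀ (n : ℕ) (a b : ℝ) (u v : Fin n → ℝ),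
      (Matrix.vecCons a u = Matrix.vecCons b v) = (a = b ∧ u = v) by
        intro n a b u v; exact propext Matrix.vecCons_inj,
    Matrix.vecEmpty, eq_self_iff_true, and_true]
  refine ⟨by ring, by ring, by ring, by ring, by ring, by ring, by ring, by ring,
    by ring, by ring⟩
end

section
/- (Dual recursion, degree 3.) For all x, y ∈ ℝ², R3(β(x))·ψ3(y) = (1 − x·y)·ψ2(y), where x·y is the Euclidean inner product. -/
lemma cpl_half (p q y : ℝ × ℝ) : cpl ((2⁻¹ : ℝ) • (p + q)) y = (cpl p y + cpl q y) / 2 := by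
  simp only [cpl, dotR2, Prod.smul_fst, Prod.smul_snd, Prod.fst_add, Prod.snd_add, smul_eq_mul]
  ring

lemma cpl_third (p q r y : ℝ × ℝ) :
    cpl ((3⁻¹ : ℝ) • (p + q + r)) y = (cpl p y + cpl q y + cpl r y) / 3 := by
  simp only [cpl, dotR2, Prod.smul_fst, Prod.smul_snd, Prod.fst_add, Prod.snd_add, smul_eq_mul]
  ring

set_option maxHeartbeats 2000000 in
/-- dual recursion, degree 3: `R3(β(x)) ψ3(y) = (1 − x·y) ψ2(y)`. -/
theorem dual_recursion_deg3
    (p1 p2 p3 : ℝ × ℝ)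
    (hind : AffineIndependent ℝ ![p1, p2, p3])
    (p4 p5 p6 p7 p8 p9 p10 : ℝ × ℝ)
    (h4 : p4 = (2⁻¹ : ℝ) • (p1 + p2))
    (h5 : p5 = (2⁻¹ : ℝ) • (p2 + p3))
    (h6 : p6 = (2⁻¹ : ℝ) • (p3 + p1))
    (h7 : p7 = (2⁻¹ : ℝ) • (p4 + p6))
    (h8 : p8 = (2⁻¹ : ℝ) • (p4 + p5))
    (h9 : p9 = (2⁻¹ : ℝ) • (p5 + p6))
    (h10 : p10 = (3⁻¹ : ℝ) • (p1 + p2 + p3))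
    (x y : ℝ × ℝ) (b1 b2 b3 : ℝ)
    (hx : x = b1 • p1 + b2 • p2 + b3 • p3)
    (hb : b1 + b2 + b3 = 1) :
    (R3 b1 b2 b3).mulVec
      ![cpl p1 y ^ 3, cpl p1 y ^ 2 * cpl p4 y, cpl p1 y * cpl p2 y * cpl p4 y,
        cpl p2 y ^ 2 * cpl p4 y, cpl p2 y ^ 3, cpl p2 y ^ 2 * cpl p5 y,
        cpl p2 y * cpl p3 y * cpl p5 y, cpl p3 y ^ 2 * cpl p5 y, cpl p3 y ^ 3,
        cpl p3 y ^ 2 * cpl p6 y, cpl p1 y * cpl p3 y * cpl p6 y, cpl p1 y ^ 2 * cpl p6 y,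
        cpl p1 y * cpl p4 y * cpl p6 y, cpl p2 y * cpl p4 y * cpl p5 y,
        cpl p3 y * cpl p5 y * cpl p6 y, cpl p1 y * cpl p2 y * cpl p3 y]
      = (1 - dotR2 x y) •
      ![cpl p1 y ^ 2, cpl p1 y * cpl p4 y, cpl p4 y * cpl p10 y, cpl p2 y * cpl p4 y,
        cpl p2 y ^ 2, cpl p2 y * cpl p5 y, cpl p5 y * cpl p10 y, cpl p3 y * cpl p5 y,
        cpl p3 y ^ 2, cpl p3 y * cpl p6 y, cpl p6 y * cpl p10 y, cpl p1 y * cpl p6 y]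
      := by
  have hb3 : b3 = 1 - b1 - b2 := by linarith
  subst hb3
  rw [h4, h5, h6, h10, cpl_half, cpl_half, cpl_half, cpl_third]
  have hxd : 1 - dotR2 x y = b1 * cpl p1 y + b2 * cpl p2 y + (1 - b1 - b2) * cpl p3 y := by
    subst hx
    simp only [cpl, dotR2, Prod.smul_fst, Prod.smul_snd, Prod.fst_add, Prod.snd_add,
      smul_eq_mul]
    ring
  rw [hxd]
  simp only [R3, R3g, Matrix.cons_mulVec, Matrix.cons_dotProduct, Matrix.dotProduct_of_isEmpty,
    Matrix.head_cons, Matrix.tail_cons, Matrix.empty_mulVec, Matrix.smul_cons, smul_eq_mul,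
    Matrix.smul_empty, add_zero]
  simp only [Matrix.vecCons, Fin.cons_inj]
  refine ⟨by ring, by ring, by ring, by ring, by ring, by ring, by ring, by ring, by ring,
    by ring, by ring, by ring, trivial⟩
end

section
/- (Marsden identity in recursion-matrix form, quadratic case.) For all x, y ∈ ℝ², R1(β(x))·R2(β(x))·ψ2(y) = (1 − x·y)²·𝟙, where 𝟙 ∈ ℝ^{12} is the all-ones vector and x·y is the Euclidean inner product. -/
lemma consEq {n : ℕ} {x y : ℝ} {u v : Fin n → ℝ} :
    Matrix.vecCons x u = Matrix.vecCons y v ↔ x = y ∧ u = v := Matrix.vecCons_inj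

lemma const12 (r : ℝ) : (fun _ : Fin 12 => r) = ![r,r,r,r,r,r,r,r,r,r,r,r] := by
  funext i; fin_cases i <;> rfl

set_option maxHeartbeats 1600000 in
/-- Marsden identity, quadratic:
`R1(β(x)) R2(β(x)) ψ2(y) = (1 − x·y)² 𝟙`. -/
theorem marsden_quadratic
    (p1 p2 p3 : ℝ × ℝ)
    (hind : AffineIndependent ℝ ![p1, p2, p3])
    (p4 p5 p6 p7 p8 p9 p10 : ℝ × ℝ)
    (h4 : p4 = (2⁻¹ : ℝ) • (p1 + p2))
    (h5 : p5 = (2⁻¹ : ℝ) • (p2 + p3))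
    (h6 : p6 = (2⁻¹ : ℝ) • (p3 + p1))
    (h7 : p7 = (2⁻¹ : ℝ) • (p4 + p6))
    (h8 : p8 = (2⁻¹ : ℝ) • (p4 + p5))
    (h9 : p9 = (2⁻¹ : ℝ) • (p5 + p6))
    (h10 : p10 = (3⁻¹ : ℝ) • (p1 + p2 + p3))
    (x y : ℝ × ℝ) (b1 b2 b3 : ℝ)
    (hx : x = b1 • p1 + b2 • p2 + b3 • p3)
    (hb : b1 + b2 + b3 = 1) :
    (R1 b1 b2 b3 * R2 b1 b2 b3).mulVec
      ![cpl p1 y ^ 2, cpl p1 y * cpl p4 y, cpl p4 y * cpl p10 y, cpl p2 y * cpl p4 y,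
        cpl p2 y ^ 2, cpl p2 y * cpl p5 y, cpl p5 y * cpl p10 y, cpl p3 y * cpl p5 y,
        cpl p3 y ^ 2, cpl p3 y * cpl p6 y, cpl p6 y * cpl p10 y, cpl p1 y * cpl p6 y]
      = fun _ : Fin 12 => (1 - dotR2 x y) ^ 2 := by
  have hc4 : cpl p4 y = (cpl p1 y + cpl p2 y) / 2 := by
    simp [h4, cpl, dotR2]; ring
  have hc5 : cpl p5 y = (cpl p2 y + cpl p3 y) / 2 := by
    simp [h5, cpl, dotR2]; ring
  have hc6 : cpl p6 y = (cpl p3 y + cpl p1 y) / 2 := by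
    simp [h6, cpl, dotR2]; ring
  have hc10 : cpl p10 y = (cpl p1 y + cpl p2 y + cpl p3 y) / 3 := by
    simp [h10, cpl, dotR2]; ring
  have hcx : 1 - dotR2 x y = b1 * cpl p1 y + b2 * cpl p2 y + b3 * cpl p3 y := by
    simp [hx, cpl, dotR2]
    nlinarith [hb]
  rw [hc4, hc5, hc6, hc10, hcx]
  have hb3 : b3 = 1 - b1 - b2 := by linarith
  subst hb3
  generalize cpl p1 y = c1
  generalize cpl p2 y = c2
  generalize cpl p3 y = c3
  rw [← Matrix.mulVec_mulVec, const12]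
  simp only [R1, R2, R1g, R2g, Matrix.cons_mulVec, Matrix.cons_dotProduct,
    Matrix.empty_mulVec, Matrix.dotProduct_of_isEmpty, Matrix.head_cons, Matrix.tail_cons]
  simp only [consEq]
  and_intros <;> first | rfl | trivial | ring
end

section
/- (Marsden identity in recursion-matrix form, cubic case.) For all x, y ∈ ℝ², R1(β(x))·R2(β(x))·R3(β(x))·ψ3(y) = (1 − x·y)³·𝟙, where 𝟙 ∈ ℝ^{12} is the all-ones vector and x·y is the Euclidean inner product. -/
private lemma ps_step3 (b1 b2 b3 c1 c2 c3 : ℝ) (hb : b1 + b2 + b3 = 1) :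
    (R3 b1 b2 b3).mulVec
      ![c1 ^ 3, c1 ^ 2 * ((c1 + c2) / 2), c1 * c2 * ((c1 + c2) / 2),
        c2 ^ 2 * ((c1 + c2) / 2), c2 ^ 3, c2 ^ 2 * ((c2 + c3) / 2),
        c2 * c3 * ((c2 + c3) / 2), c3 ^ 2 * ((c2 + c3) / 2), c3 ^ 3,
        c3 ^ 2 * ((c3 + c1) / 2), c1 * c3 * ((c3 + c1) / 2), c1 ^ 2 * ((c3 + c1) / 2),
        c1 * ((c1 + c2) / 2) * ((c3 + c1) / 2), c2 * ((c1 + c2) / 2) * ((c2 + c3) / 2),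
        c3 * ((c2 + c3) / 2) * ((c3 + c1) / 2), c1 * c2 * c3]
    = (b1 * c1 + b2 * c2 + b3 * c3) •
      ![c1 ^ 2, c1 * (c1 + c2) / 2,
        (c1 ^ 2 + 2 * c1 * c2 + c1 * c3 + c2 ^ 2 + c2 * c3) / 6,
        c2 * (c1 + c2) / 2, c2 ^ 2, c2 * (c2 + c3) / 2,
        (c1 * c2 + c1 * c3 + c2 ^ 2 + 2 * c2 * c3 + c3 ^ 2) / 6,
        c3 * (c2 + c3) / 2, c3 ^ 2, c3 * (c1 + c3) / 2,
        (c1 ^ 2 + c1 * c2 + 2 * c1 * c3 + c2 * c3 + c3 ^ 2) / 6,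
        c1 * (c1 + c3) / 2] := by
  have hb3 : b3 = 1 - b1 - b2 := by linarith
  subst hb3
  simp only [R3, R3g, Matrix.cons_mulVec, Matrix.empty_mulVec, Matrix.cons_dotProduct,
    Matrix.dotProduct_of_isEmpty, Matrix.smul_cons, Matrix.smul_empty, Matrix.head_cons,
    Matrix.tail_cons, smul_eq_mul]
  simp only [Matrix.vecCons, Fin.cons_inj]
  and_intros <;> first | rfl | trivial | ring

private lemma ps_step2 (b1 b2 b3 c1 c2 c3 : ℝ) (hb : b1 + b2 + b3 = 1) :
    (R2 b1 b2 b3).mulVec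
      ![c1 ^ 2, c1 * (c1 + c2) / 2,
        (c1 ^ 2 + 2 * c1 * c2 + c1 * c3 + c2 ^ 2 + c2 * c3) / 6,
        c2 * (c1 + c2) / 2, c2 ^ 2, c2 * (c2 + c3) / 2,
        (c1 * c2 + c1 * c3 + c2 ^ 2 + 2 * c2 * c3 + c3 ^ 2) / 6,
        c3 * (c2 + c3) / 2, c3 ^ 2, c3 * (c1 + c3) / 2,
        (c1 ^ 2 + c1 * c2 + 2 * c1 * c3 + c2 * c3 + c3 ^ 2) / 6,
        c1 * (c1 + c3) / 2]
    = (b1 * c1 + b2 * c2 + b3 * c3) •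
      ![c1, c2, c3, (c1 + c2) / 2, (c2 + c3) / 2, (c1 + c3) / 2,
        (2 * c1 + c2 + c3) / 4, (c1 + 2 * c2 + c3) / 4, (c1 + c2 + 2 * c3) / 4,
        (c1 + c2 + c3) / 3] := by
  have hb3 : b3 = 1 - b1 - b2 := by linarith
  subst hb3
  simp only [R2, R2g, Matrix.cons_mulVec, Matrix.empty_mulVec, Matrix.cons_dotProduct,
    Matrix.dotProduct_of_isEmpty, Matrix.smul_cons, Matrix.smul_empty, Matrix.head_cons,
    Matrix.tail_cons, smul_eq_mul]
  simp only [Matrix.vecCons, Fin.cons_inj]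
  and_intros <;> first | rfl | trivial | ring

private lemma ps_step1 (b1 b2 b3 c1 c2 c3 : ℝ) (hb : b1 + b2 + b3 = 1) :
    (R1 b1 b2 b3).mulVec
      ![c1, c2, c3, (c1 + c2) / 2, (c2 + c3) / 2, (c1 + c3) / 2,
        (2 * c1 + c2 + c3) / 4, (c1 + 2 * c2 + c3) / 4, (c1 + c2 + 2 * c3) / 4,
        (c1 + c2 + c3) / 3]
    = (b1 * c1 + b2 * c2 + b3 * c3) • ![(1:ℝ),1,1,1,1,1,1,1,1,1,1,1] := by
  have hb3 : b3 = 1 - b1 - b2 := by linarith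
  subst hb3
  simp only [R1, R1g, Matrix.cons_mulVec, Matrix.empty_mulVec, Matrix.cons_dotProduct,
    Matrix.dotProduct_of_isEmpty, Matrix.smul_cons, Matrix.smul_empty, Matrix.head_cons,
    Matrix.tail_cons, smul_eq_mul]
  simp only [Matrix.vecCons, Fin.cons_inj]
  and_intros <;> first | rfl | trivial | ring

/-- Marsden identity, cubic:
`R1(β(x)) R2(β(x)) R3(β(x)) ψ3(y) = (1 − x·y)³ 𝟙`. -/
theorem marsden_cubic
    (p1 p2 p3 : ℝ × ℝ)
    (hind : AffineIndependent ℝ ![p1, p2, p3])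
    (p4 p5 p6 p7 p8 p9 p10 : ℝ × ℝ)
    (h4 : p4 = (2⁻¹ : ℝ) • (p1 + p2))
    (h5 : p5 = (2⁻¹ : ℝ) • (p2 + p3))
    (h6 : p6 = (2⁻¹ : ℝ) • (p3 + p1))
    (h7 : p7 = (2⁻¹ : ℝ) • (p4 + p6))
    (h8 : p8 = (2⁻¹ : ℝ) • (p4 + p5))
    (h9 : p9 = (2⁻¹ : ℝ) • (p5 + p6))
    (h10 : p10 = (3⁻¹ : ℝ) • (p1 + p2 + p3))
    (x y : ℝ × ℝ) (b1 b2 b3 : ℝ)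
    (hx : x = b1 • p1 + b2 • p2 + b3 • p3)
    (hb : b1 + b2 + b3 = 1) :
    (R1 b1 b2 b3 * R2 b1 b2 b3 * R3 b1 b2 b3).mulVec
      ![cpl p1 y ^ 3, cpl p1 y ^ 2 * cpl p4 y, cpl p1 y * cpl p2 y * cpl p4 y,
        cpl p2 y ^ 2 * cpl p4 y, cpl p2 y ^ 3, cpl p2 y ^ 2 * cpl p5 y,
        cpl p2 y * cpl p3 y * cpl p5 y, cpl p3 y ^ 2 * cpl p5 y, cpl p3 y ^ 3,
        cpl p3 y ^ 2 * cpl p6 y, cpl p1 y * cpl p3 y * cpl p6 y, cpl p1 y ^ 2 * cpl p6 y,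
        cpl p1 y * cpl p4 y * cpl p6 y, cpl p2 y * cpl p4 y * cpl p5 y,
        cpl p3 y * cpl p5 y * cpl p6 y, cpl p1 y * cpl p2 y * cpl p3 y]
      = fun _ : Fin 12 => (1 - dotR2 x y) ^ 3 := by

  have hc4 : cpl p4 y = (cpl p1 y + cpl p2 y) / 2 := by
    simp only [cpl, dotR2, h4, Prod.fst_add, Prod.snd_add, Prod.smul_fst, Prod.smul_snd,
      smul_eq_mul]
    ring
  have hc5 : cpl p5 y = (cpl p2 y + cpl p3 y) / 2 := by
    simp only [cpl, dotR2, h5, Prod.fst_add, Prod.snd_add, Prod.smul_fst, Prod.smul_snd,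
      smul_eq_mul]
    ring
  have hc6 : cpl p6 y = (cpl p3 y + cpl p1 y) / 2 := by
    simp only [cpl, dotR2, h6, Prod.fst_add, Prod.snd_add, Prod.smul_fst, Prod.smul_snd,
      smul_eq_mul]
    ring
  have hkey : 1 - dotR2 x y = b1 * cpl p1 y + b2 * cpl p2 y + b3 * cpl p3 y := by
    simp only [cpl, dotR2, hx, Prod.fst_add, Prod.snd_add, Prod.smul_fst, Prod.smul_snd,
      smul_eq_mul]
    linear_combination -hb
  rw [hkey, hc4, hc5, hc6]
  generalize cpl p1 y = c1
  generalize cpl p2 y = c2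
  generalize cpl p3 y = c3
  rw [Matrix.mul_assoc, ← Matrix.mulVec_mulVec, ← Matrix.mulVec_mulVec,
    ps_step3 b1 b2 b3 c1 c2 c3 hb, Matrix.mulVec_smul, ps_step2 b1 b2 b3 c1 c2 c3 hb,
    Matrix.mulVec_smul, Matrix.mulVec_smul, ps_step1 b1 b2 b3 c1 c2 c3 hb]
  simp only [Matrix.smul_cons, Matrix.smul_empty, smul_eq_mul]
  funext i
  fin_cases i <;>
  · show (b1 * c1 + b2 * c2 + b3 * c3) *
        ((b1 * c1 + b2 * c2 + b3 * c3) * ((b1 * c1 + b2 * c2 + b3 * c3) * 1))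
        = (b1 * c1 + b2 * c2 + b3 * c3) ^ 3
    ring
end

section
/- (Marsden identity for the alternative quadratic S-basis.) Let T2 ∈ ℝ^{12×12} be the identity matrix except that its principal submatrix on rows and columns (3, 7, 11) equals [[1/2, 1/2, 0], [0, 1/2, 1/2], [1/2, 0, 1/2]]. Then for all y ∈ ℝ², T2·ψ̃2(y) = ψ2(y); consequently, for all x, y ∈ ℝ², R1(β(x))·(R2(β(x))·T2)·ψ̃2(y) = (1 − x·y)²·𝟙, where 𝟙 ∈ ℝ^{12} is the all-ones vector. -/
/-- The 12×12 matrix `T2`: the identity except that its principal submatrix on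
rows/columns (3,7,11) (1-based; here 0-based indices 2,6,10) is
`[[1/2,1/2,0],[0,1/2,1/2],[1/2,0,1/2]]`. -/
noncomputable def T2 : Matrix (Fin 12) (Fin 12) ℝ :=
  Matrix.of fun i j =>
    if i = 2 then (if j = 2 ∨ j = 6 then 1/2 else 0)
    else if i = 6 then (if j = 6 ∨ j = 10 then 1/2 else 0)
    else if i = 10 then (if j = 2 ∨ j = 10 then 1/2 else 0)
    else if i = j then 1 else 0

@[simp] lemma v12_0 {α : Type*} (a0 a1 a2 a3 a4 a5 a6 a7 a8 a9 a10 a11 : α) :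
    (![a0, a1, a2, a3, a4, a5, a6, a7, a8, a9, a10, a11] : Fin 12 → α) (0 : Fin 12) = a0 := rfl
@[simp] lemma v12_1 {α : Type*} (a0 a1 a2 a3 a4 a5 a6 a7 a8 a9 a10 a11 : α) :
    (![a0, a1, a2, a3, a4, a5, a6, a7, a8, a9, a10, a11] : Fin 12 → α) (1 : Fin 12) = a1 := rfl
@[simp] lemma v12_2 {α : Type*} (a0 a1 a2 a3 a4 a5 a6 a7 a8 a9 a10 a11 : α) :
    (![a0, a1, a2, a3, a4, a5, a6, a7, a8, a9, a10, a11] : Fin 12 → α) (2 : Fin 12) = a2 := rfl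
@[simp] lemma v12_3 {α : Type*} (a0 a1 a2 a3 a4 a5 a6 a7 a8 a9 a10 a11 : α) :
    (![a0, a1, a2, a3, a4, a5, a6, a7, a8, a9, a10, a11] : Fin 12 → α) (3 : Fin 12) = a3 := rfl
@[simp] lemma v12_4 {α : Type*} (a0 a1 a2 a3 a4 a5 a6 a7 a8 a9 a10 a11 : α) :
    (![a0, a1, a2, a3, a4, a5, a6, a7, a8, a9, a10, a11] : Fin 12 → α) (4 : Fin 12) = a4 := rfl
@[simp] lemma v12_5 {α : Type*} (a0 a1 a2 a3 a4 a5 a6 a7 a8 a9 a10 a11 : α) :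
    (![a0, a1, a2, a3, a4, a5, a6, a7, a8, a9, a10, a11] : Fin 12 → α) (5 : Fin 12) = a5 := rfl
@[simp] lemma v12_6 {α : Type*} (a0 a1 a2 a3 a4 a5 a6 a7 a8 a9 a10 a11 : α) :
    (![a0, a1, a2, a3, a4, a5, a6, a7, a8, a9, a10, a11] : Fin 12 → α) (6 : Fin 12) = a6 := rfl
@[simp] lemma v12_7 {α : Type*} (a0 a1 a2 a3 a4 a5 a6 a7 a8 a9 a10 a11 : α) :
    (![a0, a1, a2, a3, a4, a5, a6, a7, a8, a9, a10, a11] : Fin 12 → α) (7 : Fin 12) = a7 := rfl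
@[simp] lemma v12_8 {α : Type*} (a0 a1 a2 a3 a4 a5 a6 a7 a8 a9 a10 a11 : α) :
    (![a0, a1, a2, a3, a4, a5, a6, a7, a8, a9, a10, a11] : Fin 12 → α) (8 : Fin 12) = a8 := rfl
@[simp] lemma v12_9 {α : Type*} (a0 a1 a2 a3 a4 a5 a6 a7 a8 a9 a10 a11 : α) :
    (![a0, a1, a2, a3, a4, a5, a6, a7, a8, a9, a10, a11] : Fin 12 → α) (9 : Fin 12) = a9 := rfl
@[simp] lemma v12_10 {α : Type*} (a0 a1 a2 a3 a4 a5 a6 a7 a8 a9 a10 a11 : α) :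
    (![a0, a1, a2, a3, a4, a5, a6, a7, a8, a9, a10, a11] : Fin 12 → α) (10 : Fin 12) = a10 := rfl
@[simp] lemma v12_11 {α : Type*} (a0 a1 a2 a3 a4 a5 a6 a7 a8 a9 a10 a11 : α) :
    (![a0, a1, a2, a3, a4, a5, a6, a7, a8, a9, a10, a11] : Fin 12 → α) (11 : Fin 12) = a11 := rfl
@[simp] lemma v10_0 {α : Type*} (a0 a1 a2 a3 a4 a5 a6 a7 a8 a9 : α) :
    (![a0, a1, a2, a3, a4, a5, a6, a7, a8, a9] : Fin 10 → α) (0 : Fin 10) = a0 := rfl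
@[simp] lemma v10_1 {α : Type*} (a0 a1 a2 a3 a4 a5 a6 a7 a8 a9 : α) :
    (![a0, a1, a2, a3, a4, a5, a6, a7, a8, a9] : Fin 10 → α) (1 : Fin 10) = a1 := rfl
@[simp] lemma v10_2 {α : Type*} (a0 a1 a2 a3 a4 a5 a6 a7 a8 a9 : α) :
    (![a0, a1, a2, a3, a4, a5, a6, a7, a8, a9] : Fin 10 → α) (2 : Fin 10) = a2 := rfl
@[simp] lemma v10_3 {α : Type*} (a0 a1 a2 a3 a4 a5 a6 a7 a8 a9 : α) :
    (![a0, a1, a2, a3, a4, a5, a6, a7, a8, a9] : Fin 10 → α) (3 : Fin 10) = a3 := rfl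
@[simp] lemma v10_4 {α : Type*} (a0 a1 a2 a3 a4 a5 a6 a7 a8 a9 : α) :
    (![a0, a1, a2, a3, a4, a5, a6, a7, a8, a9] : Fin 10 → α) (4 : Fin 10) = a4 := rfl
@[simp] lemma v10_5 {α : Type*} (a0 a1 a2 a3 a4 a5 a6 a7 a8 a9 : α) :
    (![a0, a1, a2, a3, a4, a5, a6, a7, a8, a9] : Fin 10 → α) (5 : Fin 10) = a5 := rfl
@[simp] lemma v10_6 {α : Type*} (a0 a1 a2 a3 a4 a5 a6 a7 a8 a9 : α) :
    (![a0, a1, a2, a3, a4, a5, a6, a7, a8, a9] : Fin 10 → α) (6 : Fin 10) = a6 := rfl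
@[simp] lemma v10_7 {α : Type*} (a0 a1 a2 a3 a4 a5 a6 a7 a8 a9 : α) :
    (![a0, a1, a2, a3, a4, a5, a6, a7, a8, a9] : Fin 10 → α) (7 : Fin 10) = a7 := rfl
@[simp] lemma v10_8 {α : Type*} (a0 a1 a2 a3 a4 a5 a6 a7 a8 a9 : α) :
    (![a0, a1, a2, a3, a4, a5, a6, a7, a8, a9] : Fin 10 → α) (8 : Fin 10) = a8 := rfl
@[simp] lemma v10_9 {α : Type*} (a0 a1 a2 a3 a4 a5 a6 a7 a8 a9 : α) :
    (![a0, a1, a2, a3, a4, a5, a6, a7, a8, a9] : Fin 10 → α) (9 : Fin 10) = a9 := rfl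

set_option maxHeartbeats 1000000 in
theorem T2_eq : T2 =
  !![1, 0, 0, 0, 0, 0, 0, 0, 0, 0, 0, 0;
     0, 1, 0, 0, 0, 0, 0, 0, 0, 0, 0, 0;
     0, 0, 1/2, 0, 0, 0, 1/2, 0, 0, 0, 0, 0;
     0, 0, 0, 1, 0, 0, 0, 0, 0, 0, 0, 0;
     0, 0, 0, 0, 1, 0, 0, 0, 0, 0, 0, 0;
     0, 0, 0, 0, 0, 1, 0, 0, 0, 0, 0, 0;
     0, 0, 0, 0, 0, 0, 1/2, 0, 0, 0, 1/2, 0;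
     0, 0, 0, 0, 0, 0, 0, 1, 0, 0, 0, 0;
     0, 0, 0, 0, 0, 0, 0, 0, 1, 0, 0, 0;
     0, 0, 0, 0, 0, 0, 0, 0, 0, 1, 0, 0;
     0, 0, 1/2, 0, 0, 0, 0, 0, 0, 0, 1/2, 0;
     0, 0, 0, 0, 0, 0, 0, 0, 0, 0, 0, 1] := by
  funext i j
  fin_cases i <;> fin_cases j <;> rfl

set_option maxHeartbeats 1000000 in
theorem T2_mulVec (a0 a1 a2 a3 a4 a5 a6 a7 a8 a9 a10 a11 : ℝ) :
    T2.mulVec ![a0, a1, a2, a3, a4, a5, a6, a7, a8, a9, a10, a11] =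
      ![a0, a1, (a2 + a6)/2, a3, a4, a5, (a6 + a10)/2, a7, a8, a9, (a2 + a10)/2, a11] := by
  rw [T2_eq]
  simp only [Matrix.cons_mulVec, Matrix.cons_dotProduct, Matrix.dotProduct_of_isEmpty,
    Matrix.empty_mulVec, Matrix.head_cons, Matrix.tail_cons, add_zero]
  simp only [Matrix.vecCons, Fin.cons_inj, and_true]
  and_intros <;> ring

set_option maxHeartbeats 1000000 in
theorem R2_mulVec_psi (b1 b2 c1 c2 c3 : ℝ) :
    (R2 b1 b2 (1 - b1 - b2)).mulVec
      ![c1^2, c1*((c1+c2)/2), ((c1+c2)/2)*((c1+c2+c3)/3), c2*((c1+c2)/2), c2^2,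
        c2*((c2+c3)/2), ((c2+c3)/2)*((c1+c2+c3)/3), c3*((c2+c3)/2), c3^2,
        c3*((c3+c1)/2), ((c3+c1)/2)*((c1+c2+c3)/3), c1*((c3+c1)/2)] =
      ![(b1*c1 + b2*c2 + (1-b1-b2)*c3) * c1,
        (b1*c1 + b2*c2 + (1-b1-b2)*c3) * c2,
        (b1*c1 + b2*c2 + (1-b1-b2)*c3) * c3,
        (b1*c1 + b2*c2 + (1-b1-b2)*c3) * ((c1+c2)/2),
        (b1*c1 + b2*c2 + (1-b1-b2)*c3) * ((c2+c3)/2),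
        (b1*c1 + b2*c2 + (1-b1-b2)*c3) * ((c3+c1)/2),
        (1/4)*c3^2+(1/4)*c2*c3+(1/2)*c1*c3+(-1/4)*b2*c3^2+(1/4)*b2*c2^2+(-1/2)*b2*c1*c3+(1/2)*b2*c1*c2+(-1/4)*b1*c3^2+(-1/4)*b1*c2*c3+(-1/4)*b1*c1*c3+(1/4)*b1*c1*c2+(1/2)*b1*c1^2,
        (1/4)*c3^2+(1/2)*c2*c3+(1/4)*c1*c3+(-1/4)*b2*c3^2+(-1/4)*b2*c2*c3+(1/2)*b2*c2^2+(-1/4)*b2*c1*c3+(1/4)*b2*c1*c2+(-1/4)*b1*c3^2+(-1/2)*b1*c2*c3+(1/2)*b1*c1*c2+(1/4)*b1*c1^2,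
        (1/2)*c3^2+(1/4)*c2*c3+(1/4)*c1*c3+(-1/2)*b2*c3^2+(1/4)*b2*c2*c3+(1/4)*b2*c2^2+(-1/4)*b2*c1*c3+(1/4)*b2*c1*c2+(-1/2)*b1*c3^2+(-1/4)*b1*c2*c3+(1/4)*b1*c1*c3+(1/4)*b1*c1*c2+(1/4)*b1*c1^2,
        (b1*c1 + b2*c2 + (1-b1-b2)*c3) * ((c1+c2+c3)/3)] := by
  rw [R2, R2g]
  simp only [Matrix.cons_mulVec, Matrix.cons_dotProduct, Matrix.dotProduct_of_isEmpty,
    Matrix.empty_mulVec, Matrix.head_cons, Matrix.tail_cons, add_zero]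
  simp only [Matrix.vecCons, Fin.cons_inj, and_true]
  and_intros <;> ring

set_option maxHeartbeats 1000000 in
theorem R1_mulVec_u (b1 b2 c1 c2 c3 : ℝ) :
    (R1 b1 b2 (1 - b1 - b2)).mulVec
      ![(b1*c1 + b2*c2 + (1-b1-b2)*c3) * c1,
        (b1*c1 + b2*c2 + (1-b1-b2)*c3) * c2,
        (b1*c1 + b2*c2 + (1-b1-b2)*c3) * c3,
        (b1*c1 + b2*c2 + (1-b1-b2)*c3) * ((c1+c2)/2),
        (b1*c1 + b2*c2 + (1-b1-b2)*c3) * ((c2+c3)/2),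
        (b1*c1 + b2*c2 + (1-b1-b2)*c3) * ((c3+c1)/2),
        (1/4)*c3^2+(1/4)*c2*c3+(1/2)*c1*c3+(-1/4)*b2*c3^2+(1/4)*b2*c2^2+(-1/2)*b2*c1*c3+(1/2)*b2*c1*c2+(-1/4)*b1*c3^2+(-1/4)*b1*c2*c3+(-1/4)*b1*c1*c3+(1/4)*b1*c1*c2+(1/2)*b1*c1^2,
        (1/4)*c3^2+(1/2)*c2*c3+(1/4)*c1*c3+(-1/4)*b2*c3^2+(-1/4)*b2*c2*c3+(1/2)*b2*c2^2+(-1/4)*b2*c1*c3+(1/4)*b2*c1*c2+(-1/4)*b1*c3^2+(-1/2)*b1*c2*c3+(1/2)*b1*c1*c2+(1/4)*b1*c1^2,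
        (1/2)*c3^2+(1/4)*c2*c3+(1/4)*c1*c3+(-1/2)*b2*c3^2+(1/4)*b2*c2*c3+(1/4)*b2*c2^2+(-1/4)*b2*c1*c3+(1/4)*b2*c1*c2+(-1/2)*b1*c3^2+(-1/4)*b1*c2*c3+(1/4)*b1*c1*c3+(1/4)*b1*c1*c2+(1/4)*b1*c1^2,
        (b1*c1 + b2*c2 + (1-b1-b2)*c3) * ((c1+c2+c3)/3)] =
      ![(b1*c1 + b2*c2 + (1-b1-b2)*c3)^2, (b1*c1 + b2*c2 + (1-b1-b2)*c3)^2, (b1*c1 + b2*c2 + (1-b1-b2)*c3)^2, (b1*c1 + b2*c2 + (1-b1-b2)*c3)^2, (b1*c1 + b2*c2 + (1-b1-b2)*c3)^2, (b1*c1 + b2*c2 + (1-b1-b2)*c3)^2, (b1*c1 + b2*c2 + (1-b1-b2)*c3)^2, (b1*c1 + b2*c2 + (1-b1-b2)*c3)^2, (b1*c1 + b2*c2 + (1-b1-b2)*c3)^2, (b1*c1 + b2*c2 + (1-b1-b2)*c3)^2, (b1*c1 + b2*c2 + (1-b1-b2)*c3)^2, (b1*c1 + b2*c2 + (1-b1-b2)*c3)^2]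 := by
  rw [R1, R1g]
  simp only [Matrix.cons_mulVec, Matrix.cons_dotProduct, Matrix.dotProduct_of_isEmpty,
    Matrix.empty_mulVec, Matrix.head_cons, Matrix.tail_cons, add_zero]
  simp only [Matrix.vecCons, Fin.cons_inj, and_true]
  and_intros <;> ring

/-- Marsden identity for the alternative quadratic S-basis:
`T2 ψ̃2(y) = ψ2(y)` for all `y`, and consequently
`R1(β(x)) (R2(β(x)) T2) ψ̃2(y) = (1 − x·y)² 𝟙`. -/
theorem marsden_alternative_quadratic
    (p1 p2 p3 : ℝ × ℝ)
    (hind : AffineIndependent ℝ ![p1, p2, p3])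
    (p4 p5 p6 p10 : ℝ × ℝ)
    (h4 : p4 = (2⁻¹ : ℝ) • (p1 + p2))
    (h5 : p5 = (2⁻¹ : ℝ) • (p2 + p3))
    (h6 : p6 = (2⁻¹ : ℝ) • (p3 + p1))
    (h10 : p10 = (3⁻¹ : ℝ) • (p1 + p2 + p3)) :
    (∀ y : ℝ × ℝ,
      T2.mulVec
        ![cpl p1 y ^ 2, cpl p1 y * cpl p4 y, cpl p1 y * cpl p10 y, cpl p2 y * cpl p4 y,
          cpl p2 y ^ 2, cpl p2 y * cpl p5 y, cpl p2 y * cpl p10 y, cpl p3 y * cpl p5 y,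
          cpl p3 y ^ 2, cpl p3 y * cpl p6 y, cpl p3 y * cpl p10 y, cpl p1 y * cpl p6 y] =
        ![cpl p1 y ^ 2, cpl p1 y * cpl p4 y, cpl p4 y * cpl p10 y, cpl p2 y * cpl p4 y,
          cpl p2 y ^ 2, cpl p2 y * cpl p5 y, cpl p5 y * cpl p10 y, cpl p3 y * cpl p5 y,
          cpl p3 y ^ 2, cpl p3 y * cpl p6 y, cpl p6 y * cpl p10 y, cpl p1 y * cpl p6 y]) ∧
    (∀ (x y : ℝ × ℝ) (b1 b2 b3 : ℝ),
      x = b1 • p1 + b2 • p2 + b3 • p3 → b1 + b2 + b3 = 1 →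
      (R1 b1 b2 b3 * (R2 b1 b2 b3 * T2)).mulVec
        ![cpl p1 y ^ 2, cpl p1 y * cpl p4 y, cpl p1 y * cpl p10 y, cpl p2 y * cpl p4 y,
          cpl p2 y ^ 2, cpl p2 y * cpl p5 y, cpl p2 y * cpl p10 y, cpl p3 y * cpl p5 y,
          cpl p3 y ^ 2, cpl p3 y * cpl p6 y, cpl p3 y * cpl p10 y, cpl p1 y * cpl p6 y] =
        fun _ : Fin 12 => (1 - dotR2 x y) ^ 2) := by
  have hc4 : ∀ y : ℝ × ℝ, cpl p4 y = (cpl p1 y + cpl p2 y)/2 := by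
    intro y
    simp only [cpl, dotR2, h4, Prod.smul_fst, Prod.smul_snd, Prod.fst_add, Prod.snd_add,
      smul_eq_mul]
    ring
  have hc5 : ∀ y : ℝ × ℝ, cpl p5 y = (cpl p2 y + cpl p3 y)/2 := by
    intro y
    simp only [cpl, dotR2, h5, Prod.smul_fst, Prod.smul_snd, Prod.fst_add, Prod.snd_add,
      smul_eq_mul]
    ring
  have hc6 : ∀ y : ℝ × ℝ, cpl p6 y = (cpl p3 y + cpl p1 y)/2 := by
    intro y
    simp only [cpl, dotR2, h6, Prod.smul_fst, Prod.smul_snd, Prod.fst_add, Prod.snd_add,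
      smul_eq_mul]
    ring
  have hc10 : ∀ y : ℝ × ℝ, cpl p10 y = (cpl p1 y + cpl p2 y + cpl p3 y)/3 := by
    intro y
    simp only [cpl, dotR2, h10, Prod.smul_fst, Prod.smul_snd, Prod.fst_add, Prod.snd_add,
      smul_eq_mul]
    ring
  constructor
  · intro y
    rw [T2_mulVec, hc4, hc5, hc6, hc10]
    simp only [Matrix.vecCons, Fin.cons_inj, and_true, true_and]
    and_intros <;> ring
  · intro x y b1 b2 b3 hx hs
    have hb3 : b3 = 1 - b1 - b2 := by linarith
    subst hb3
    have hdot : 1 - dotR2 x y =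
        b1 * cpl p1 y + b2 * cpl p2 y + (1 - b1 - b2) * cpl p3 y := by
      subst hx
      simp only [cpl, dotR2, Prod.smul_fst, Prod.smul_snd, Prod.fst_add, Prod.snd_add,
        smul_eq_mul]
      ring
    rw [← Matrix.mulVec_mulVec, ← Matrix.mulVec_mulVec, T2_mulVec, hc4, hc5, hc6, hc10]
    have hv : (![cpl p1 y ^ 2, cpl p1 y * ((cpl p1 y + cpl p2 y)/2),
        (cpl p1 y * ((cpl p1 y + cpl p2 y + cpl p3 y)/3) +
          cpl p2 y * ((cpl p1 y + cpl p2 y + cpl p3 y)/3)) / 2,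
        cpl p2 y * ((cpl p1 y + cpl p2 y)/2), cpl p2 y ^ 2,
        cpl p2 y * ((cpl p2 y + cpl p3 y)/2),
        (cpl p2 y * ((cpl p1 y + cpl p2 y + cpl p3 y)/3) +
          cpl p3 y * ((cpl p1 y + cpl p2 y + cpl p3 y)/3)) / 2,
        cpl p3 y * ((cpl p2 y + cpl p3 y)/2), cpl p3 y ^ 2,
        cpl p3 y * ((cpl p3 y + cpl p1 y)/2),
        (cpl p1 y * ((cpl p1 y + cpl p2 y + cpl p3 y)/3) +
          cpl p3 y * ((cpl p1 y + cpl p2 y + cpl p3 y)/3)) / 2,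
        cpl p1 y * ((cpl p3 y + cpl p1 y)/2)] : Fin 12 → ℝ) =
        ![cpl p1 y^2, cpl p1 y*((cpl p1 y+cpl p2 y)/2),
          ((cpl p1 y+cpl p2 y)/2)*((cpl p1 y+cpl p2 y+cpl p3 y)/3),
          cpl p2 y*((cpl p1 y+cpl p2 y)/2), cpl p2 y^2,
          cpl p2 y*((cpl p2 y+cpl p3 y)/2),
          ((cpl p2 y+cpl p3 y)/2)*((cpl p1 y+cpl p2 y+cpl p3 y)/3),
          cpl p3 y*((cpl p2 y+cpl p3 y)/2), cpl p3 y^2,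
          cpl p3 y*((cpl p3 y+cpl p1 y)/2),
          ((cpl p3 y+cpl p1 y)/2)*((cpl p1 y+cpl p2 y+cpl p3 y)/3),
          cpl p1 y*((cpl p3 y+cpl p1 y)/2)] := by
      simp only [Matrix.vecCons, Fin.cons_inj, and_true, true_and]
      and_intros <;> ring
    rw [hv, R2_mulVec_psi, R1_mulVec_u, hdot]
    funext i
    fin_cases i <;> rfl
end

section
/- (Differentiation formula, first derivative.) Let F : ℝ² → ℝ^{12×16} be the matrix-valued map F(x) = R1(β(x))·R2(β(x))·R3(β(x)) (each entry of F is a polynomial function of x). Then for every x ∈ ℝ² and every u ∈ ℝ² with directional coordinates α, the directional derivative of F at x in direction u equals 3·R1(β(x))·R2(β(x))·U3(α), where U3(α) is the constant matrix obtained from R3(β) by replacing each βj by αj, each β_{i,j} by αi − αj, each γj by 2αj, and each σ_{i,j} by αi + αj. -/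
/-- `U1(α)`: `R1` with `βj ↦ αj`, `β_{i,j} ↦ αi − αj`, `γj ↦ 2αj`, `σ_{i,j} ↦ αi + αj`. -/
noncomputable def U1 (a1 a2 a3 : ℝ) : Matrix (Fin 12) (Fin 10) ℝ := R1g a1 a2 a3 0
/-- `U2(α)`: `R2` with `βj ↦ αj`, `β_{i,j} ↦ αi − αj`, `γj ↦ 2αj`, `σ_{i,j} ↦ αi + αj`. -/
noncomputable def U2 (a1 a2 a3 : ℝ) : Matrix (Fin 10) (Fin 12) ℝ := R2g a1 a2 a3 0
/-- `U3(α)`: `R3` with `βj ↦ αj`, `β_{i,j} ↦ αi − αj`, `γj ↦ 2αj`, `σ_{i,j} ↦ αi + αj`. -/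
noncomputable def U3 (a1 a2 a3 : ℝ) : Matrix (Fin 12) (Fin 16) ℝ := R3g a1 a2 a3 0


set_option maxHeartbeats 40000000

/-- Entrywise linear decomposition of `R1g`. -/
lemma R1g_decomp (b1 b2 b3 c : ℝ) (i : Fin 12) (k : Fin 10) :
    R1g b1 b2 b3 c i k = c * R1g 0 0 0 1 i k + b1 * R1g 1 0 0 0 i k
      + b2 * R1g 0 1 0 0 i k + b3 * R1g 0 0 1 0 i k := by
  fin_cases i <;> fin_cases k <;>
    norm_num [R1g, Matrix.cons_val_succ] <;> ring_nf

/-- Entrywise linear decomposition of `R2g`. -/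
lemma R2g_decomp (b1 b2 b3 c : ℝ) (i : Fin 10) (k : Fin 12) :
    R2g b1 b2 b3 c i k = c * R2g 0 0 0 1 i k + b1 * R2g 1 0 0 0 i k
      + b2 * R2g 0 1 0 0 i k + b3 * R2g 0 0 1 0 i k := by
  fin_cases i <;> fin_cases k <;>
    norm_num [R2g, Matrix.cons_val_succ] <;> ring_nf

/-- Entrywise linear decomposition of `R3g`. -/
lemma R3g_decomp (b1 b2 b3 c : ℝ) (i : Fin 12) (k : Fin 16) :
    R3g b1 b2 b3 c i k = c * R3g 0 0 0 1 i k + b1 * R3g 1 0 0 0 i k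
      + b2 * R3g 0 1 0 0 i k + b3 * R3g 0 0 1 0 i k := by
  fin_cases i <;> fin_cases k <;>
    norm_num [R3g, Matrix.cons_val_succ] <;> ring_nf

lemma R1_line (b1 b2 b3 a1 a2 a3 t : ℝ) :
    R1 (b1 + t * a1) (b2 + t * a2) (b3 + t * a3) = R1 b1 b2 b3 + t • U1 a1 a2 a3 := by
  ext i k
  simp only [R1, U1, Matrix.add_apply, Matrix.smul_apply, smul_eq_mul]
  rw [R1g_decomp (b1 + t * a1), R1g_decomp b1, R1g_decomp a1]
  ring

lemma R2_line (b1 b2 b3 a1 a2 a3 t : ℝ) :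
    R2 (b1 + t * a1) (b2 + t * a2) (b3 + t * a3) = R2 b1 b2 b3 + t • U2 a1 a2 a3 := by
  ext i k
  simp only [R2, U2, Matrix.add_apply, Matrix.smul_apply, smul_eq_mul]
  rw [R2g_decomp (b1 + t * a1), R2g_decomp b1, R2g_decomp a1]
  ring

lemma R3_line (b1 b2 b3 a1 a2 a3 t : ℝ) :
    R3 (b1 + t * a1) (b2 + t * a2) (b3 + t * a3) = R3 b1 b2 b3 + t • U3 a1 a2 a3 := by
  ext i k
  simp only [R3, U3, Matrix.add_apply, Matrix.smul_apply, smul_eq_mul]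
  rw [R3g_decomp (b1 + t * a1), R3g_decomp b1, R3g_decomp a1]
  ring

/-- First commutation identity: `U1(α) R2(β) = R1(β) U2(α)`. -/
lemma key1 (b1 b2 b3 a1 a2 a3 : ℝ) (hb : b1 + b2 + b3 = 1) (ha : a1 + a2 + a3 = 0) :
    U1 a1 a2 a3 * R2 b1 b2 b3 = R1 b1 b2 b3 * U2 a1 a2 a3 := by
  obtain rfl : b3 = 1 - b1 - b2 := by linarith
  obtain rfl : a3 = -a1 - a2 := by linarith
  ext i j
  fin_cases i <;> fin_cases j <;>
    norm_num [Matrix.mul_apply, Fin.sum_univ_succ, Matrix.cons_val_succ,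
      U1, U2, R1, R2, R1g, R2g] <;> ring_nf

/-- Second commutation identity: `U2(α) R3(β) = R2(β) U3(α)`. -/
lemma key2 (b1 b2 b3 a1 a2 a3 : ℝ) (hb : b1 + b2 + b3 = 1) (ha : a1 + a2 + a3 = 0) :
    U2 a1 a2 a3 * R3 b1 b2 b3 = R2 b1 b2 b3 * U3 a1 a2 a3 := by
  obtain rfl : b3 = 1 - b1 - b2 := by linarith
  obtain rfl : a3 = -a1 - a2 := by linarith
  ext i j
  fin_cases i <;> fin_cases j <;>
    norm_num [Matrix.mul_apply, Fin.sum_univ_succ, Matrix.cons_val_succ,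
      U2, U3, R2, R3, R2g, R3g] <;> ring_nf

lemma hasDerivAt_affine (c d : ℝ) : HasDerivAt (fun t : ℝ => c + t * d) d 0 := by
  simpa using ((hasDerivAt_id (0 : ℝ)).mul_const d).const_add c

/-- Derivative at `0` of an entry of the cubic matrix curve
`t ↦ (P + t P')(Q + t Q')(S + t S')`. -/
lemma tripleEntry (P P' : Matrix (Fin 12) (Fin 10) ℝ) (Q Q' : Matrix (Fin 10) (Fin 12) ℝ)
    (S S' : Matrix (Fin 12) (Fin 16) ℝ) (i : Fin 12) (j : Fin 16) :
    HasDerivAt (fun t : ℝ => ((P + t • P') * (Q + t • Q') * (S + t • S')) i j)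
      ((P' * Q * S + P * Q' * S + P * Q * S') i j) 0 := by
  have h2 : ∀ (k : Fin 10) (l : Fin 12),
      HasDerivAt (fun t : ℝ => (P i k + t * P' i k) * (Q k l + t * Q' k l))
        (P' i k * Q k l + P i k * Q' k l) 0 := by
    intro k l
    simpa using (hasDerivAt_affine (P i k) (P' i k)).fun_mul (hasDerivAt_affine (Q k l) (Q' k l))
  have h3 : ∀ l : Fin 12,
      HasDerivAt (fun t : ℝ => ∑ k, (P i k + t * P' i k) * (Q k l + t * Q' k l))
        (∑ k, (P' i k * Q k l + P i k * Q' k l)) 0 :=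
    fun l => HasDerivAt.fun_sum fun k _ => h2 k l
  have h4 : ∀ l : Fin 12,
      HasDerivAt
        (fun t : ℝ => (∑ k, (P i k + t * P' i k) * (Q k l + t * Q' k l)) * (S l j + t * S' l j))
        ((∑ k, (P' i k * Q k l + P i k * Q' k l)) * S l j
          + (∑ k, P i k * Q k l) * S' l j) 0 := by
    intro l
    simpa using (h3 l).fun_mul (hasDerivAt_affine (S l j) (S' l j))
  have h5 := HasDerivAt.fun_sum (u := Finset.univ) fun l (_ : l ∈ Finset.univ) => h4 l
  have hfun : (fun t : ℝ => ((P + t • P') * (Q + t • Q') * (S + t • S')) i j)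
      = fun t : ℝ =>
        ∑ l, (∑ k, (P i k + t * P' i k) * (Q k l + t * Q' k l)) * (S l j + t * S' l j) := by
    funext t
    simp only [Matrix.mul_apply, Matrix.add_apply, Matrix.smul_apply, smul_eq_mul]
  rw [hfun]
  convert h5 using 1
  · rfl
  · rfl
  simp only [Matrix.add_apply, Matrix.mul_apply]
  rw [← Finset.sum_add_distrib, ← Finset.sum_add_distrib]
  refine Finset.sum_congr rfl fun l _ => ?_
  rw [Finset.sum_add_distrib, add_mul]

/-- A function on `ℝ × ℝ` that is affine around a basepoint `x` is differentiable at `x`. -/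
lemma diff_of_affine (f : ℝ × ℝ → ℝ) (x : ℝ × ℝ)
    (hadd : ∀ w w', f (x + (w + w')) = f (x + w) + f (x + w') - f x)
    (hsmul : ∀ (t : ℝ) (w : ℝ × ℝ), f (x + t • w) = f x + t * (f (x + w) - f x)) :
    DifferentiableAt ℝ f x := by
  let L : (ℝ × ℝ) →ₗ[ℝ] ℝ :=
    { toFun := fun w => f (x + w) - f x
      map_add' := by
        intro w w'
        show f (x + (w + w')) - f x = (f (x + w) - f x) + (f (x + w') - f x)
        rw [hadd w w']; ring
      map_smul' := by
        intro t w
        simp only [RingHom.id_apply, smul_eq_mul]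
        show f (x + t • w) - f x = t * (f (x + w) - f x)
        rw [hsmul t w]; ring }
  have hrep : f = fun z => f x + LinearMap.toContinuousLinearMap L (z - x) := by
    funext z
    simp only [LinearMap.coe_toContinuousLinearMap']
    show f z = f x + (f (x + (z - x)) - f x)
    rw [show x + (z - x) = z from by abel]
    ring
  rw [hrep]
  exact (differentiableAt_const _).add
    (((LinearMap.toContinuousLinearMap L).differentiable.differentiableAt).comp x
      (differentiableAt_id.sub (differentiableAt_const _)))

/-- differentiation formula, first derivative: with
`F(x) = R1(β(x)) R2(β(x)) R3(β(x))`, the directional derivative of `F` at `x` in a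
direction `u` with directional coordinates `α` is `3 R1(β(x)) R2(β(x)) U3(α)`
(entrywise). -/
theorem differentiation_formula_first
    (p1 p2 p3 : ℝ × ℝ)
    (hind : AffineIndependent ℝ ![p1, p2, p3])
    (bary : ℝ × ℝ → Fin 3 → ℝ)
    (hbary : ∀ z : ℝ × ℝ,
      z = bary z 0 • p1 + bary z 1 • p2 + bary z 2 • p3 ∧
      bary z 0 + bary z 1 + bary z 2 = 1)
    (F : ℝ × ℝ → Matrix (Fin 12) (Fin 16) ℝ)
    (hF : ∀ z, F z = R1 (bary z 0) (bary z 1) (bary z 2) *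
      R2 (bary z 0) (bary z 1) (bary z 2) * R3 (bary z 0) (bary z 1) (bary z 2))
    (x u : ℝ × ℝ) (a1 a2 a3 : ℝ)
    (hu : u = a1 • p1 + a2 • p2 + a3 • p3)
    (ha : a1 + a2 + a3 = 0) :
    ∀ (i : Fin 12) (j : Fin 16),
      fderiv ℝ (fun z => F z i j) x u =
        3 * (R1 (bary x 0) (bary x 1) (bary x 2) *
          R2 (bary x 0) (bary x 1) (bary x 2) * U3 a1 a2 a3) i j := by
  intro i j
  obtain ⟨hx, hxs⟩ := hbary x
  -- uniqueness of barycentric coordinates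
  have uniq : ∀ (z : ℝ × ℝ) (w1 w2 w3 : ℝ), w1 + w2 + w3 = 1 →
      w1 • p1 + w2 • p2 + w3 • p3 = z →
      w1 = bary z 0 ∧ w2 = bary z 1 ∧ w3 = bary z 2 := by
    intro z w1 w2 w3 hs hz
    have h' : w1 • p1 + w2 • p2 + w3 • p3
        = bary z 0 • p1 + bary z 1 • p2 + bary z 2 • p3 := hz.trans (hbary z).1
    have h := affineIndependent_iff.mp hind Finset.univ
      (fun e => ![w1, w2, w3] e - bary z e)
      (by
        simp [Fin.sum_univ_three]
        have := (hbary z).2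
        linarith)
      (by
        have hmod : (∑ e : Fin 3, (![w1, w2, w3] e - bary z e) • ![p1, p2, p3] e)
            = (w1 • p1 + w2 • p2 + w3 • p3)
              - (bary z 0 • p1 + bary z 1 • p2 + bary z 2 • p3) := by
          simp [Fin.sum_univ_three]
          module
        rw [hmod, h', sub_self])
    refine ⟨?_, ?_, ?_⟩
    · have h0 := h 0 (Finset.mem_univ _); simpa [sub_eq_zero] using h0
    · have h1 := h 1 (Finset.mem_univ _); simpa [sub_eq_zero] using h1
    · have h2 := h 2 (Finset.mem_univ _); simpa [sub_eq_zero] using h2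
  -- barycentric coordinates along the line through x in direction u
  have hline : ∀ t : ℝ, bary (x + t • u) 0 = bary x 0 + t * a1
      ∧ bary (x + t • u) 1 = bary x 1 + t * a2
      ∧ bary (x + t • u) 2 = bary x 2 + t * a3 := by
    intro t
    have h := uniq (x + t • u) (bary x 0 + t * a1) (bary x 1 + t * a2) (bary x 2 + t * a3)
      (by linear_combination hxs + t * ha)
      (by
        rw [hu]
        conv_rhs => rw [hx]
        module)
    exact ⟨h.1.symm, h.2.1.symm, h.2.2.symm⟩
  -- affine structure of bary around x
  have hadd : ∀ (k : Fin 3) (w w' : ℝ × ℝ),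
      bary (x + (w + w')) k = bary (x + w) k + bary (x + w') k - bary x k := by
    intro k w w'
    have h := uniq (x + (w + w'))
      (bary (x + w) 0 + bary (x + w') 0 - bary x 0)
      (bary (x + w) 1 + bary (x + w') 1 - bary x 1)
      (bary (x + w) 2 + bary (x + w') 2 - bary x 2)
      (by
        have hB := (hbary (x + w)).2
        have hC := (hbary (x + w')).2
        linarith)
      (by
        have e1 := (hbary (x + w)).1
        have e2 := (hbary (x + w')).1
        have hmod : (bary (x + w) 0 + bary (x + w') 0 - bary x 0) • p1
            + (bary (x + w) 1 + bary (x + w') 1 - bary x 1) • p2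
            + (bary (x + w) 2 + bary (x + w') 2 - bary x 2) • p3
            = (bary (x + w) 0 • p1 + bary (x + w) 1 • p2 + bary (x + w) 2 • p3)
              + (bary (x + w') 0 • p1 + bary (x + w') 1 • p2 + bary (x + w') 2 • p3)
              - (bary x 0 • p1 + bary x 1 • p2 + bary x 2 • p3) := by module
        rw [hmod, ← e1, ← e2, ← hx]
        abel)
    obtain ⟨h1, h2, h3⟩ := h
    fin_cases k
    · exact h1.symm
    · exact h2.symm
    · exact h3.symm
  have hsmul : ∀ (k : Fin 3) (t : ℝ) (w : ℝ × ℝ),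
      bary (x + t • w) k = bary x k + t * (bary (x + w) k - bary x k) := by
    intro k t w
    have h := uniq (x + t • w)
      (bary x 0 + t * (bary (x + w) 0 - bary x 0))
      (bary x 1 + t * (bary (x + w) 1 - bary x 1))
      (bary x 2 + t * (bary (x + w) 2 - bary x 2))
      (by
        have hB := (hbary (x + w)).2
        linear_combination (1 - t) * hxs + t * hB)
      (by
        have e1 := (hbary (x + w)).1
        have hmod : (bary x 0 + t * (bary (x + w) 0 - bary x 0)) • p1
            + (bary x 1 + t * (bary (x + w) 1 - bary x 1)) • p2
            + (bary x 2 + t * (bary (x + w) 2 - bary x 2)) • p3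
            = (bary x 0 • p1 + bary x 1 • p2 + bary x 2 • p3)
              + t • ((bary (x + w) 0 • p1 + bary (x + w) 1 • p2 + bary (x + w) 2 • p3)
                - (bary x 0 • p1 + bary x 1 • p2 + bary x 2 • p3)) := by module
        rw [hmod, ← e1, ← hx, add_sub_cancel_left])
    obtain ⟨h1, h2, h3⟩ := h
    fin_cases k
    · exact h1.symm
    · exact h2.symm
    · exact h3.symm
  have hd : ∀ k : Fin 3, DifferentiableAt ℝ (fun z => bary z k) x :=
    fun k => diff_of_affine (fun z => bary z k) x (hadd k) (hsmul k)
  -- differentiability of the entries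
  have hR1d : ∀ (i' : Fin 12) (k : Fin 10),
      DifferentiableAt ℝ (fun z => R1 (bary z 0) (bary z 1) (bary z 2) i' k) x := by
    intro i' k
    have hrw : (fun z => R1 (bary z 0) (bary z 1) (bary z 2) i' k)
        = fun z => 1 * R1g 0 0 0 1 i' k + bary z 0 * R1g 1 0 0 0 i' k
            + bary z 1 * R1g 0 1 0 0 i' k + bary z 2 * R1g 0 0 1 0 i' k := by
      funext z; exact R1g_decomp _ _ _ _ _ _
    rw [hrw]
    exact (((differentiableAt_const _).add ((hd 0).mul_const _)).add
      ((hd 1).mul_const _)).add ((hd 2).mul_const _)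
  have hR2d : ∀ (i' : Fin 10) (k : Fin 12),
      DifferentiableAt ℝ (fun z => R2 (bary z 0) (bary z 1) (bary z 2) i' k) x := by
    intro i' k
    have hrw : (fun z => R2 (bary z 0) (bary z 1) (bary z 2) i' k)
        = fun z => 1 * R2g 0 0 0 1 i' k + bary z 0 * R2g 1 0 0 0 i' k
            + bary z 1 * R2g 0 1 0 0 i' k + bary z 2 * R2g 0 0 1 0 i' k := by
      funext z; exact R2g_decomp _ _ _ _ _ _
    rw [hrw]
    exact (((differentiableAt_const _).add ((hd 0).mul_const _)).add
      ((hd 1).mul_const _)).add ((hd 2).mul_const _)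
  have hR3d : ∀ (i' : Fin 12) (k : Fin 16),
      DifferentiableAt ℝ (fun z => R3 (bary z 0) (bary z 1) (bary z 2) i' k) x := by
    intro i' k
    have hrw : (fun z => R3 (bary z 0) (bary z 1) (bary z 2) i' k)
        = fun z => 1 * R3g 0 0 0 1 i' k + bary z 0 * R3g 1 0 0 0 i' k
            + bary z 1 * R3g 0 1 0 0 i' k + bary z 2 * R3g 0 0 1 0 i' k := by
      funext z; exact R3g_decomp _ _ _ _ _ _
    rw [hrw]
    exact (((differentiableAt_const _).add ((hd 0).mul_const _)).add
      ((hd 1).mul_const _)).add ((hd 2).mul_const _)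
  have hdF : DifferentiableAt ℝ (fun z => F z i j) x := by
    have hFe : (fun z => F z i j)
        = fun z => ∑ l : Fin 12,
            (∑ k : Fin 10, R1 (bary z 0) (bary z 1) (bary z 2) i k
              * R2 (bary z 0) (bary z 1) (bary z 2) k l)
            * R3 (bary z 0) (bary z 1) (bary z 2) l j := by
      funext z
      rw [hF z]
      simp only [Matrix.mul_apply]
    rw [hFe]
    exact DifferentiableAt.fun_sum fun l _ =>
      (DifferentiableAt.fun_sum fun k _ => (hR1d i k).fun_mul (hR2d k l)).fun_mul (hR3d l j)
  -- the curve t ↦ F (x + t u) i j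
  have hcurve : (fun t : ℝ => F (x + t • u) i j)
      = fun t : ℝ => ((R1 (bary x 0) (bary x 1) (bary x 2) + t • U1 a1 a2 a3)
          * (R2 (bary x 0) (bary x 1) (bary x 2) + t • U2 a1 a2 a3)
          * (R3 (bary x 0) (bary x 1) (bary x 2) + t • U3 a1 a2 a3)) i j := by
    funext t
    obtain ⟨l0, l1, l2⟩ := hline t
    rw [hF, l0, l1, l2, R1_line, R2_line, R3_line]
  have hD0 : HasDerivAt (fun t : ℝ => F (x + t • u) i j)
      ((U1 a1 a2 a3 * R2 (bary x 0) (bary x 1) (bary x 2) * R3 (bary x 0) (bary x 1) (bary x 2)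
        + R1 (bary x 0) (bary x 1) (bary x 2) * U2 a1 a2 a3 * R3 (bary x 0) (bary x 1) (bary x 2)
        + R1 (bary x 0) (bary x 1) (bary x 2) * R2 (bary x 0) (bary x 1) (bary x 2)
          * U3 a1 a2 a3) i j) 0 := by
    rw [hcurve]
    exact tripleEntry _ _ _ _ _ _ i j
  have hlin : HasDerivAt (fun t : ℝ => x + t • u) u 0 := by
    simpa using ((hasDerivAt_id (0 : ℝ)).smul_const u).const_add x
  have hfd : HasFDerivAt (fun z => F z i j) (fderiv ℝ (fun z => F z i j) x)
      ((fun t : ℝ => x + t • u) 0) := by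
    simpa using hdF.hasFDerivAt
  have hcomp := hfd.comp_hasDerivAt 0 hlin
  have hval := hcomp.unique hD0
  have k1 := key1 (bary x 0) (bary x 1) (bary x 2) a1 a2 a3 hxs ha
  have k2 := key2 (bary x 0) (bary x 1) (bary x 2) a1 a2 a3 hxs ha
  have e1 : U1 a1 a2 a3 * R2 (bary x 0) (bary x 1) (bary x 2)
      * R3 (bary x 0) (bary x 1) (bary x 2)
      = R1 (bary x 0) (bary x 1) (bary x 2) * R2 (bary x 0) (bary x 1) (bary x 2)
        * U3 a1 a2 a3 := by
    rw [k1, Matrix.mul_assoc, k2, ← Matrix.mul_assoc]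
  have e2 : R1 (bary x 0) (bary x 1) (bary x 2) * U2 a1 a2 a3
      * R3 (bary x 0) (bary x 1) (bary x 2)
      = R1 (bary x 0) (bary x 1) (bary x 2) * R2 (bary x 0) (bary x 1) (bary x 2)
        * U3 a1 a2 a3 := by
    rw [Matrix.mul_assoc, k2, ← Matrix.mul_assoc]
  rw [hval, e1, e2]
  simp [Matrix.add_apply]
  ring
end
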